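/- arXiv:2301.03877 — 8 statements merged into one kernel-verified Lean document; each statement's English description precedes it below -/
import Mathlib

section
/- For every bounded linear operator T on a complex Hilbert space, ‖T‖_α = ‖T*‖_α for all α ∈ [0,1]. -/
variable {H : Type*} [NormedAddCommGroup H] [InnerProductSpace ℂ H] [CompleteSpace H]

/-- The numerical radius of a bounded linear operator. -/
noncomputable def numRad (T : H →L[ℂ] H) : ℝ :=
  sSup {r : ℝ | ∃ x : H, ‖x‖ = 1 ∧ r = ‖(inner ℂ (T x) x : ℂ)‖}

/-- The α-norm of a bounded linear operator. -/
noncomputable def alphaNorm (α : ℝ) (T : H →L[ℂ] H) : ℝ :=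
  sSup {r : ℝ | ∃ x : H, ‖x‖ = 1 ∧
    r = Real.sqrt (α * (‖(inner ℂ (T x) x : ℂ)‖)^2 + (1 - α) * ‖T x‖^2)}

/-- `|T| = (T* T)^(1/2)`. -/
noncomputable def absOp (T : H →L[ℂ] H) : H →L[ℂ] H :=
  CFC.sqrt (ContinuousLinearMap.adjoint T * T)

/-- `|T*| = (T T*)^(1/2)`. -/
noncomputable def absAdj (T : H →L[ℂ] H) : H →L[ℂ] H :=
  CFC.sqrt (T * ContinuousLinearMap.adjoint T)

/-- The real part `(A + A*)/2`. -/
noncomputable def reOp (A : H →L[ℂ] H) : H →L[ℂ] H :=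
  (2:ℝ)⁻¹ • (A + ContinuousLinearMap.adjoint A)

/-- The imaginary part `(A - A*)/(2i)`. -/
noncomputable def imOp (A : H →L[ℂ] H) : H →L[ℂ] H :=
  ((2 * Complex.I)⁻¹ : ℂ) • (A - ContinuousLinearMap.adjoint A)

set_option linter.unusedSectionVars false

noncomputable def qf (α : ℝ) (T : H →L[ℂ] H) (x : H) : ℝ :=
  α * (‖(inner ℂ (T x) x : ℂ)‖)^2 + (1 - α) * ‖T x‖^2

noncomputable def alphaNorm' (α : ℝ) (T : H →L[ℂ] H) : ℝ :=
  sSup {r : ℝ | ∃ x : H, ‖x‖ = 1 ∧ r = Real.sqrt (qf α T x)}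

lemma qf_nonneg {α : ℝ} (hα : α ∈ Set.Icc (0:ℝ) 1) (T : H →L[ℂ] H) (x : H) :
    0 ≤ qf α T x := by
  have h1 := hα.1; have h2 := hα.2
  unfold qf
  have := sq_nonneg (‖(inner ℂ (T x) x : ℂ)‖)
  have := sq_nonneg ‖T x‖
  nlinarith

lemma qf_le_norm_sq {α : ℝ} (hα : α ∈ Set.Icc (0:ℝ) 1) (T : H →L[ℂ] H) {x : H}
    (hx : ‖x‖ = 1) : qf α T x ≤ ‖T‖^2 := by
  have h1 : ‖(inner ℂ (T x) x : ℂ)‖ ≤ ‖T‖ := by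
    have := norm_inner_le_norm (𝕜 := ℂ) (T x) x
    have h2 := T.le_opNorm x
    rw [hx] at this h2
    simpa using this.trans (by simpa using h2)
  have h2 : ‖T x‖ ≤ ‖T‖ := by simpa [hx] using T.le_opNorm x
  have h0 : 0 ≤ ‖(inner ℂ (T x) x : ℂ)‖ := norm_nonneg _
  have h3 := norm_nonneg (T x)
  have p1 : ‖(inner ℂ (T x) x : ℂ)‖^2 ≤ ‖T‖^2 := by nlinarith
  have p2 : ‖T x‖^2 ≤ ‖T‖^2 := by nlinarith
  unfold qf
  nlinarith [mul_le_mul_of_nonneg_left p1 hα.1,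
    mul_le_mul_of_nonneg_left p2 (by linarith [hα.2] : (0:ℝ) ≤ 1 - α)]

lemma qf_bddAbove {α : ℝ} (hα : α ∈ Set.Icc (0:ℝ) 1) (T : H →L[ℂ] H) :
    BddAbove {r : ℝ | ∃ x : H, ‖x‖ = 1 ∧ r = Real.sqrt (qf α T x)} := by
  refine ⟨‖T‖, ?_⟩
  rintro r ⟨x, hx, rfl⟩
  calc Real.sqrt (qf α T x) ≤ Real.sqrt (‖T‖^2) :=
        Real.sqrt_le_sqrt (qf_le_norm_sq hα T hx)
    _ = ‖T‖ := Real.sqrt_sq (norm_nonneg _)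

lemma sqrt_qf_le {α : ℝ} (hα : α ∈ Set.Icc (0:ℝ) 1) (T : H →L[ℂ] H) {x : H}
    (hx : ‖x‖ = 1) : Real.sqrt (qf α T x) ≤ alphaNorm' α T :=
  le_csSup (qf_bddAbove hα T) ⟨x, hx, rfl⟩

lemma alphaNorm'_nonneg {α : ℝ} (hα : α ∈ Set.Icc (0:ℝ) 1) (T : H →L[ℂ] H) {x : H}
    (hx : ‖x‖ = 1) : 0 ≤ alphaNorm' α T :=
  (Real.sqrt_nonneg _).trans (sqrt_qf_le hα T hx)

lemma qf_le_sq {α : ℝ} (hα : α ∈ Set.Icc (0:ℝ) 1) (T : H →L[ℂ] H) {x : H}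
    (hx : ‖x‖ = 1) : qf α T x ≤ (alphaNorm' α T)^2 := by
  have h1 := sqrt_qf_le hα T hx
  have h2 := Real.sq_sqrt (qf_nonneg hα T x)
  nlinarith [Real.sqrt_nonneg (qf α T x)]

set_option maxHeartbeats 1000000 in
open ContinuousLinearMap in
lemma qf_le_sq_adjoint {α : ℝ} (hα : α ∈ Set.Icc (0:ℝ) 1) (T : H →L[ℂ] H) {x : H}
    (hx : ‖x‖ = 1) : qf α T x ≤ (alphaNorm' α (adjoint T))^2 := by
  set M := alphaNorm' α (adjoint T) with hMdef
  have hM0 : 0 ≤ M := alphaNorm'_nonneg hα (adjoint T) hx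
  have hqadj : ∀ y : H, ‖y‖ = 1 → qf α (adjoint T) y ≤ M^2 :=
    fun y hy => qf_le_sq hα (adjoint T) hy
  set z : ℂ := (inner ℂ (T x) x : ℂ) with hzdef
  set a : ℝ := ‖z‖ with hadef
  have ha0 : 0 ≤ a := norm_nonneg _
  have hadjx : (inner ℂ ((adjoint T) x) x : ℂ) = (starRingEnd ℂ) z := by
    rw [hzdef, adjoint_inner_left, ← inner_conj_symm]
  by_cases hc : α = 1
  · subst hc
    have h1 : qf 1 T x = a^2 := by unfold qf; simp [hadef, hzdef]
    have h2 : qf 1 (adjoint T) x = a^2 := by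
      unfold qf; rw [hadjx]; simp [hadef]
    rw [h1, ← h2]; exact hqadj x hx
  · have hc1 : α < 1 := lt_of_le_of_ne hα.2 hc
    set c : ℝ := 1 - α with hcdef
    have hc0 : (0:ℝ) < c := by simp [hcdef]; linarith
    obtain ⟨u, hu1, huz⟩ : ∃ u : ℂ, ‖u‖ = 1 ∧ (starRingEnd ℂ) u * z = (a:ℂ) := by
      by_cases hz : z = 0
      · exact ⟨1, by simp, by simp [hz, hadef]⟩
      · have ha' : (0:ℝ) < a := by
          simpa [hadef] using (norm_pos_iff.mpr hz)
        refine ⟨z / a, ?_, ?_⟩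
        · rw [norm_div, Complex.norm_real, Real.norm_eq_abs, ← hadef, abs_of_pos ha']
          field_simp
        · rw [map_div₀, Complex.conj_ofReal, div_mul_eq_mul_div, mul_comm,
            Complex.mul_conj, Complex.normSq_eq_norm_sq, ← hadef]
          rw [sq]
          push_cast
          field_simp
    set r : ℝ := α * a / c with hrdef
    have hr0 : 0 ≤ r := div_nonneg (mul_nonneg hα.1 ha0) hc0.le
    have hcr : c * r = α * a := by rw [hrdef]; field_simp
    set S : H →L[ℂ] H := u • T + (r : ℂ) • 1 with hSdef
    set S' : H →L[ℂ] H := (starRingEnd ℂ) u • (adjoint T) + (r : ℂ) • 1 with hS'def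
    have hS' : S' = adjoint S := by
      rw [eq_adjoint_iff]
      intro v w
      simp only [hSdef, hS'def, add_apply, smul_apply, one_apply,
        inner_add_left, inner_add_right, inner_smul_left, inner_smul_right,
        adjoint_inner_left, Complex.conj_ofReal, RingHom.id_apply,
        starRingEnd_self_apply, Complex.conj_conj]
      rfl
    have hnorm : ‖S'‖ = ‖S‖ := by
      rw [hS']
      exact (ContinuousLinearMap.adjoint : (H →L[ℂ] H) ≃ₗᵢ⋆[ℂ] (H →L[ℂ] H)).norm_map S
    clear_value M z a c r S S'
    have hSx : ‖S x‖^2 = ‖T x‖^2 + 2*(r*a) + r^2 := by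
      have h1 : S x = u • (T x) + (r:ℂ) • x := by simp [hSdef]
      rw [h1, @norm_add_sq ℂ]
      have h2 : (inner ℂ (u • (T x)) ((r:ℂ) • x) : ℂ) = (r:ℂ) * ((starRingEnd ℂ) u * z) := by
        rw [inner_smul_left, inner_smul_right, ← hzdef]; ring
      rw [h2, huz]
      have h3 : ‖u • (T x)‖ = ‖T x‖ := by
        rw [norm_smul, hu1, one_mul]
      have h4 : ‖(r:ℂ) • x‖ = r := by
        rw [norm_smul, hx, Complex.norm_real, Real.norm_eq_abs, abs_of_nonneg hr0, mul_one]
      rw [h3, h4]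
      simp only [← Complex.ofReal_mul, RCLike.re_to_complex, Complex.ofReal_re]
    have hS'y : ∀ y : H, ‖y‖ = 1 → c * ‖S' y‖^2 - c*r^2 - α*a^2 ≤ qf α (adjoint T) y := by
      intro y hy
      set b : ℝ := ‖(inner ℂ ((adjoint T) y) y : ℂ)‖ with hbdef
      have hb0 : 0 ≤ b := norm_nonneg _
      set w : ℝ := (u * (inner ℂ ((adjoint T) y) y : ℂ)).re with hwdef
      set n : ℝ := ‖(adjoint T) y‖ with hndef
      have h1 : S' y = (starRingEnd ℂ) u • ((adjoint T) y) + (r:ℂ) • y := by simp [hS'def]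
      have h2 : ‖S' y‖^2 = n^2 + 2*(r * w) + r^2 := by
        rw [h1, @norm_add_sq ℂ]
        have e1 : (inner ℂ ((starRingEnd ℂ) u • ((adjoint T) y)) ((r:ℂ) • y) : ℂ)
            = (r:ℂ) * (u * (inner ℂ ((adjoint T) y) y : ℂ)) := by
          rw [inner_smul_left, inner_smul_right, Complex.conj_conj]; ring
        rw [e1]
        have e2 : ‖(starRingEnd ℂ) u • ((adjoint T) y)‖ = n := by
          rw [hndef, norm_smul, Complex.norm_conj, hu1, one_mul]
        have e3 : ‖(r:ℂ) • y‖ = r := by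
          rw [norm_smul, hy, Complex.norm_real, Real.norm_eq_abs, abs_of_nonneg hr0, mul_one]
        rw [e2, e3, hwdef]
        simp only [RCLike.re_to_complex, Complex.mul_re, Complex.ofReal_re, Complex.ofReal_im]
        ring
      have h3 : w ≤ b := by
        rw [hwdef, hbdef]
        calc (u * (inner ℂ ((adjoint T) y) y : ℂ)).re
            ≤ ‖(u * (inner ℂ ((adjoint T) y) y : ℂ))‖ := Complex.re_le_norm _
          _ = ‖(inner ℂ ((adjoint T) y) y : ℂ)‖ := by rw [norm_mul, hu1, one_mul]
      have hgoal : qf α (adjoint T) y = α * b^2 + c * n^2 := by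
        unfold qf; rw [← hbdef, ← hndef, hcdef]
      rw [hgoal, h2]
      clear_value b w n
      have h4 : 2*(α*a)*b ≤ α*a^2 + α*b^2 := by nlinarith [sq_nonneg (a - b), hα.1]
      have h2a : (0:ℝ) ≤ 2*(α*a) := by have := mul_nonneg hα.1 ha0; linarith
      have h5 : 2*(c*r)*w ≤ 2*(α*a)*b := by
        rw [hcr]
        exact mul_le_mul_of_nonneg_left h3 h2a
      nlinarith [h4, h5]
    set B : ℝ := M^2 + c*r^2 + α*a^2 with hBdef
    have hB0 : 0 ≤ B := by
      have := mul_nonneg hα.1 (sq_nonneg a)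
      have := mul_nonneg hc0.le (sq_nonneg r)
      nlinarith [sq_nonneg M]
    have hubound : ∀ y : H, ‖y‖ = 1 → ‖S' y‖^2 ≤ B / c := by
      intro y hy
      have h1 := hS'y y hy
      have h2 := hqadj y hy
      rw [le_div_iff₀ hc0]
      nlinarith
    have hS'norm : ‖S'‖ ≤ Real.sqrt (B / c) := by
      apply opNorm_le_bound _ (Real.sqrt_nonneg _)
      intro y
      rcases eq_or_ne y 0 with h | h
      · simp [h]
      · set t : ℂ := ((‖y‖ : ℂ))⁻¹ with htdef
        have hyn : (0:ℝ) < ‖y‖ := norm_pos_iff.mpr h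
        have hw : ‖t • y‖ = 1 := by
          rw [norm_smul, htdef, norm_inv, Complex.norm_real, Real.norm_eq_abs,
            abs_of_pos hyn]
          field_simp
        have h2 := hubound _ hw
        have h3 : ‖S' (t • y)‖ ≤ Real.sqrt (B / c) := by
          rw [← Real.sqrt_sq (norm_nonneg (S' (t • y)))]
          exact Real.sqrt_le_sqrt h2
        have h4 : S' y = (‖y‖ : ℂ) • S' (t • y) := by
          rw [map_smul, smul_smul, htdef]
          rw [mul_inv_cancel₀ (by exact_mod_cast hyn.ne' : ((‖y‖:ℂ)) ≠ 0)]
          simp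
        calc ‖S' y‖ = ‖y‖ * ‖S' (t • y)‖ := by
              rw [h4, norm_smul, Complex.norm_real, Real.norm_eq_abs, abs_of_pos hyn]
          _ ≤ Real.sqrt (B / c) * ‖y‖ := by
              rw [mul_comm]
              exact mul_le_mul_of_nonneg_right h3 hyn.le
    have hfin : ‖S x‖^2 ≤ B / c := by
      have h1 : ‖S x‖ ≤ ‖S‖ := by simpa [hx] using S.le_opNorm x
      have h2 : ‖S x‖ ≤ Real.sqrt (B / c) := h1.trans (hnorm ▸ hS'norm)
      nlinarith [norm_nonneg (S x), Real.sq_sqrt (div_nonneg hB0 hc0.le),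
        Real.sqrt_nonneg (B / c)]
    have hqx : qf α T x = c*‖S x‖^2 - c*r^2 - α*a^2 := by
      unfold qf
      rw [hSx, ← hzdef, ← hadef, ← hcdef]
      linear_combination (-(2:ℝ)*a) * hcr
    rw [hqx]
    have hcB : c * (B / c) = B := by field_simp
    nlinarith [mul_le_mul_of_nonneg_left hfin hc0.le]

open ContinuousLinearMap in
lemma alphaNorm'_le_adjoint {α : ℝ} (hα : α ∈ Set.Icc (0:ℝ) 1) (T : H →L[ℂ] H) :
    alphaNorm' α T ≤ alphaNorm' α (adjoint T) := by
  by_cases hex : ∃ x : H, ‖x‖ = 1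
  · obtain ⟨x₀, hx₀⟩ := hex
    have hM0 : 0 ≤ alphaNorm' α (adjoint T) := alphaNorm'_nonneg hα _ hx₀
    refine Real.sSup_le ?_ hM0
    rintro r ⟨x, hx, rfl⟩
    calc Real.sqrt (qf α T x) ≤ Real.sqrt ((alphaNorm' α (adjoint T))^2) :=
          Real.sqrt_le_sqrt (qf_le_sq_adjoint hα T hx)
      _ = alphaNorm' α (adjoint T) := Real.sqrt_sq hM0
  · have h1 : ∀ (A : H →L[ℂ] H),
        {r : ℝ | ∃ x : H, ‖x‖ = 1 ∧ r = Real.sqrt (qf α A x)} = ∅ := by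
      intro A
      rw [Set.eq_empty_iff_forall_notMem]
      rintro r ⟨x, hx, _⟩
      exact hex ⟨x, hx⟩
    unfold alphaNorm'
    rw [h1, h1]


theorem alphaNorm_adjoint (T : H →L[ℂ] H) (α : ℝ) (hα : α ∈ Set.Icc (0:ℝ) 1) :
    alphaNorm α T = alphaNorm α (ContinuousLinearMap.adjoint T) := by
  have key : ∀ (A : H →L[ℂ] H), alphaNorm α A = alphaNorm' α A := fun _ => rfl
  rw [key, key]
  refine le_antisymm (alphaNorm'_le_adjoint hα T) ?_
  have h := alphaNorm'_le_adjoint hα (ContinuousLinearMap.adjoint T)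
  rwa [ContinuousLinearMap.adjoint_adjoint] at h
end

section
/- Let T be a bounded linear operator on a complex Hilbert space and let f, g : [0,∞) → [0,∞) be continuous functions with f(t)g(t) = t for all t ≥ 0. Then for all α ∈ [0,1], ‖T‖_α² ≤ ‖(α/4)(f⁴(|T|) + g⁴(|T*|)) + (1−α)|T|²‖ + (α/2)‖Re(f²(|T|)g²(|T*|))‖. -/
variable {H : Type*} [NormedAddCommGroup H] [InnerProductSpace ℂ H] [CompleteSpace H]

set_option maxHeartbeats 1600000
set_option synthInstance.maxHeartbeats 1000000

open ContinuousLinearMap in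
private lemma nonneg_sTT (T : H →L[ℂ] H) : (0:H →L[ℂ] H) ≤ adjoint T * T := by
  simpa [star_eq_adjoint] using star_mul_self_nonneg T

open ContinuousLinearMap in
private lemma nonneg_TTs (T : H →L[ℂ] H) : (0:H →L[ℂ] H) ≤ T * adjoint T := by
  simpa [star_eq_adjoint] using mul_star_self_nonneg T

private lemma spec_Icc {S : H →L[ℂ] H} (hS : (0:H →L[ℂ] H) ≤ S) :
    spectrum ℝ S ⊆ Set.Icc 0 ‖S‖ := by
  intro s hs
  refine ⟨spectrum_nonneg_of_nonneg hS hs, ?_⟩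
  have h1 : ‖s‖ ≤ ‖S‖ * ‖(1 : H →L[ℂ] H)‖ := spectrum.norm_le_norm_mul_of_mem hs
  have h2 : ‖(1 : H →L[ℂ] H)‖ ≤ 1 := by
    rw [ContinuousLinearMap.one_def]; exact ContinuousLinearMap.norm_id_le
  have := h1.trans (by nlinarith [norm_nonneg S] : ‖S‖ * ‖(1 : H →L[ℂ] H)‖ ≤ ‖S‖)
  exact (le_abs_self s).trans (by simpa [Real.norm_eq_abs] using this)

private lemma poly_approx (M : ℝ) (h : ℝ → ℝ) (hh : ContinuousOn h (Set.Icc 0 M))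
    {ε : ℝ} (hε : 0 < ε) :
    ∃ p : Polynomial ℝ, ∀ s ∈ Set.Icc (0:ℝ) M, |h s - Polynomial.eval s p| ≤ ε := by
  let h' : C(Set.Icc (0:ℝ) M, ℝ) := ⟨_, hh.restrict⟩
  have hmem : h' ∈ (polynomialFunctions (Set.Icc (0:ℝ) M)).topologicalClosure := by
    rw [polynomialFunctions_closure_eq_top]; trivial
  have hcl : h' ∈ closure (polynomialFunctions (Set.Icc (0:ℝ) M) : Set C(_, ℝ)) := hmem
  obtain ⟨q, hq, hdist⟩ := Metric.mem_closure_iff.mp hcl ε hε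
  rw [SetLike.mem_coe, ← SetLike.mem_coe, polynomialFunctions_coe] at hq
  obtain ⟨p, rfl⟩ := hq
  refine ⟨p, fun s hs => ?_⟩
  have := ContinuousMap.dist_apply_le_dist (f := h') (g := Polynomial.toContinuousMapOnAlgHom _ p) ⟨s, hs⟩
  have h3 : dist (h s) (Polynomial.eval s p) ≤ dist h' (Polynomial.toContinuousMapOnAlgHom _ p) := by
    simpa [h', Polynomial.toContinuousMapOnAlgHom, Polynomial.toContinuousMapOn,
      Polynomial.toContinuousMap] using this
  rw [Real.dist_eq] at h3
  exact h3.trans hdist.le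

open ContinuousLinearMap in
private lemma T_pow_comm (T : H →L[ℂ] H) (n : ℕ) :
    T * (adjoint T * T) ^ n = (T * adjoint T) ^ n * T := by
  induction n with
  | zero => simp
  | succ n ih =>
    rw [pow_succ, ← mul_assoc, ih, mul_assoc, ← mul_assoc T, pow_succ, mul_assoc, mul_assoc, mul_assoc]

open ContinuousLinearMap in
private lemma T_aeval_comm (T : H →L[ℂ] H) (p : Polynomial ℝ) :
    T * Polynomial.aeval (adjoint T * T) p = Polynomial.aeval (T * adjoint T) p * T := by
  induction p using Polynomial.induction_on' with
  | add p q hp hq => simp only [map_add, mul_add, add_mul, hp, hq]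
  | monomial n a =>
    simp only [Polynomial.aeval_monomial]
    calc T * (algebraMap ℝ (H →L[ℂ] H) a * (adjoint T * T) ^ n)
        = algebraMap ℝ (H →L[ℂ] H) a * (T * (adjoint T * T) ^ n) := by
          rw [← mul_assoc, ← Algebra.commutes, mul_assoc]
      _ = algebraMap ℝ (H →L[ℂ] H) a * ((T * adjoint T) ^ n * T) := by rw [T_pow_comm]
      _ = algebraMap ℝ (H →L[ℂ] H) a * (T * adjoint T) ^ n * T := by rw [mul_assoc]

open ContinuousLinearMap in
private lemma intertwine (T : H →L[ℂ] H) (h : ℝ → ℝ) (hh : ContinuousOn h (Set.Ici 0)) :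
    T * cfc h (adjoint T * T) = cfc h (T * adjoint T) * T := by
  set A := adjoint T * T with hAdef
  set B := T * adjoint T with hBdef
  have hA : (0:H →L[ℂ] H) ≤ A := nonneg_sTT T
  have hB : (0:H →L[ℂ] H) ≤ B := nonneg_TTs T
  have hAs : IsSelfAdjoint A := hA.isSelfAdjoint
  have hBs : IsSelfAdjoint B := hB.isSelfAdjoint
  set M : ℝ := max ‖A‖ ‖B‖ with hMdef
  have hM0 : (0:ℝ) ≤ M := le_trans (norm_nonneg A) (le_max_left _ _)
  have hsA : spectrum ℝ A ⊆ Set.Icc 0 M :=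
    (spec_Icc hA).trans (Set.Icc_subset_Icc le_rfl (le_max_left _ _))
  have hsB : spectrum ℝ B ⊆ Set.Icc 0 M :=
    (spec_Icc hB).trans (Set.Icc_subset_Icc le_rfl (le_max_right _ _))
  have hIcc : Set.Icc (0:ℝ) M ⊆ Set.Ici 0 := fun s hs => hs.1
  have hhA : ContinuousOn h (spectrum ℝ A) := hh.mono (hsA.trans hIcc)
  have hhB : ContinuousOn h (spectrum ℝ B) := hh.mono (hsB.trans hIcc)
  have key : ∀ ε : ℝ, 0 < ε → ‖T * cfc h A - cfc h B * T‖ ≤ (2 * ‖T‖ + 1) * ε := by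
    intro ε hε
    obtain ⟨p, hp⟩ := poly_approx M h (hh.mono hIcc) hε
    have hpc : ContinuousOn (fun s => Polynomial.eval s p) (spectrum ℝ A) :=
      (Polynomial.continuous_aeval p).continuousOn
    have hpcB : ContinuousOn (fun s => Polynomial.eval s p) (spectrum ℝ B) :=
      (Polynomial.continuous_aeval p).continuousOn
    have hcA : ‖cfc h A - cfc (fun s => Polynomial.eval s p) A‖ ≤ ε := by
      rw [← cfc_sub h (fun s => Polynomial.eval s p) A hhA hpc]
      exact norm_cfc_le hε.le fun s hs => by
        simpa [Real.norm_eq_abs] using hp s (hsA hs)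
    have hcB : ‖cfc h B - cfc (fun s => Polynomial.eval s p) B‖ ≤ ε := by
      rw [← cfc_sub h (fun s => Polynomial.eval s p) B hhB hpcB]
      exact norm_cfc_le hε.le fun s hs => by
        simpa [Real.norm_eq_abs] using hp s (hsB hs)
    have haevA : cfc (fun s => Polynomial.eval s p) A = Polynomial.aeval A p :=
      cfc_polynomial p A
    have haevB : cfc (fun s => Polynomial.eval s p) B = Polynomial.aeval B p :=
      cfc_polynomial p B
    have hsplit : T * cfc h A - cfc h B * T
        = T * (cfc h A - Polynomial.aeval A p)
          + (Polynomial.aeval B p - cfc h B) * T := by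
      rw [mul_sub, sub_mul, T_aeval_comm]; abel
    calc ‖T * cfc h A - cfc h B * T‖
        ≤ ‖T * (cfc h A - Polynomial.aeval A p)‖
          + ‖(Polynomial.aeval B p - cfc h B) * T‖ := by rw [hsplit]; exact norm_add_le _ _
      _ ≤ ‖T‖ * ε + ε * ‖T‖ := by
          gcongr
          · exact (norm_mul_le _ _).trans (by
              have := haevA ▸ hcA
              exact mul_le_mul_of_nonneg_left this (norm_nonneg T))
          · exact (norm_mul_le _ _).trans (by
              have : ‖Polynomial.aeval B p - cfc h B‖ ≤ ε := by
                rw [norm_sub_rev]; exact haevB ▸ hcB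
              exact mul_le_mul_of_nonneg_right this (norm_nonneg T))
      _ ≤ (2 * ‖T‖ + 1) * ε := by nlinarith [norm_nonneg T]
  have hz : ‖T * cfc h A - cfc h B * T‖ ≤ 0 := by
    by_contra hlt
    push_neg at hlt
    set c := ‖T * cfc h A - cfc h B * T‖
    have hc : (0:ℝ) < 2 * ‖T‖ + 1 := by positivity
    have := key (c / (2 * (2 * ‖T‖ + 1))) (by positivity)
    have heq : (2 * ‖T‖ + 1) * (c / (2 * (2 * ‖T‖ + 1))) = c / 2 := by
      field_simp
    rw [heq] at this
    linarith
  exact sub_eq_zero.mp (norm_le_zero_iff.mp hz)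

open ContinuousLinearMap in
private lemma inner_sa_move {S : H →L[ℂ] H} (hS : IsSelfAdjoint S) (u v : H) :
    (inner ℂ (S u) v : ℂ) = inner ℂ u (S v) := by
  conv_lhs => rw [← hS.adjoint_eq]
  exact adjoint_inner_left S v u

open ContinuousLinearMap in
private lemma norm_apply_sq {S : H →L[ℂ] H} (hS : IsSelfAdjoint S) (u : H) :
    ‖S u‖ ^ 2 = (inner ℂ ((S * S) u) u : ℂ).re := by
  have h1 : (inner ℂ ((S * S) u) u : ℂ) = inner ℂ (S u) (S u) := by
    rw [show (S * S) u = S (S u) from rfl, inner_sa_move hS (S u) u]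
  rw [h1, ← RCLike.re_to_complex, inner_self_eq_norm_sq]

open ContinuousLinearMap in
private lemma inner_mono' {S₁ S₂ : H →L[ℂ] H} (h : S₁ ≤ S₂) (u : H) :
    (inner ℂ (S₁ u) u : ℂ).re ≤ (inner ℂ (S₂ u) u : ℂ).re := by
  have hp := (ContinuousLinearMap.le_def S₁ S₂ |>.mp h).inner_nonneg_left u
  simp only [ContinuousLinearMap.sub_apply, inner_sub_left, RCLike.re_to_complex,
    Complex.sub_re] at hp
  have hp2 := (Complex.le_def.mp hp).1
  simp only [Complex.zero_re, Complex.sub_re] at hp2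
  linarith

open ContinuousLinearMap in
private lemma inner_nonneg_of_nonneg {S : H →L[ℂ] H} (h : (0:H →L[ℂ] H) ≤ S) (u : H) :
    0 ≤ (inner ℂ (S u) u : ℂ).re := by
  have := inner_mono' h u
  simpa using this

open ContinuousLinearMap in
private lemma intertwine_adj (T : H →L[ℂ] H) (h : ℝ → ℝ) (hh : ContinuousOn h (Set.Ici 0)) :
    cfc h (adjoint T * T) * adjoint T = adjoint T * cfc h (T * adjoint T) := by
  have h1 := congrArg star (intertwine T h hh)
  rw [star_mul, star_mul, (cfc_predicate h (adjoint T * T)).star_eq,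
    (cfc_predicate h (T * adjoint T)).star_eq, star_eq_adjoint] at h1
  exact h1

open ContinuousLinearMap in
private lemma mixed_schwarz (T : H →L[ℂ] H) {f g : ℝ → ℝ}
    (hf : ContinuousOn f (Set.Ici 0)) (hg : ContinuousOn g (Set.Ici 0))
    (hfg : ∀ t ≥ (0:ℝ), f t * g t = t) (x : H) (hx : ‖x‖ = 1) :
    ‖(inner ℂ (T x) x : ℂ)‖ ^ 2 ≤
      (inner ℂ ((cfc (fun t => f t ^ 2) (absOp T)) x) x : ℂ).re *
      (inner ℂ ((cfc (fun t => g t ^ 2) (absAdj T)) x) x : ℂ).re := by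
  set A := adjoint T * T with hAdef
  set B := T * adjoint T with hBdef
  have hA : (0:H →L[ℂ] H) ≤ A := nonneg_sTT T
  have hB : (0:H →L[ℂ] H) ≤ B := nonneg_TTs T
  have hAs : IsSelfAdjoint A := hA.isSelfAdjoint
  have hBs : IsSelfAdjoint B := hB.isSelfAdjoint
  have specA : spectrum ℝ A ⊆ Set.Ici 0 := fun s hs => spectrum_nonneg_of_nonneg hA hs
  have specB : spectrum ℝ B ⊆ Set.Ici 0 := fun s hs => spectrum_nonneg_of_nonneg hB hs
  -- sqrt as real cfc
  have hsqc : ContinuousOn Real.sqrt (Set.Ici (0:ℝ)) := Real.continuous_sqrt.continuousOn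
  have sqrt_cfc : ∀ (S : H →L[ℂ] H), (0:H →L[ℂ] H) ≤ S → CFC.sqrt S = cfc Real.sqrt S := by
    intro S hS
    have hspec : spectrum ℝ S ⊆ Set.Ici 0 := fun s hs => spectrum_nonneg_of_nonneg hS hs
    have hb0 : (0:H →L[ℂ] H) ≤ cfc Real.sqrt S := cfc_nonneg (fun s _ => Real.sqrt_nonneg s)
    have hbb : cfc Real.sqrt S * cfc Real.sqrt S = S := by
      rw [← cfc_mul Real.sqrt Real.sqrt S (hsqc.mono hspec) (hsqc.mono hspec)]
      calc cfc (fun s => Real.sqrt s * Real.sqrt s) S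
          = cfc (id : ℝ → ℝ) S := cfc_congr (fun s hs => Real.mul_self_sqrt (hspec hs))
        _ = S := cfc_id ℝ S
    exact CFC.sqrt_unique hbb hb0
  have hPA : absOp T = cfc Real.sqrt A := sqrt_cfc A hA
  have hQB : absAdj T = cfc Real.sqrt B := sqrt_cfc B hB
  -- continuity of composite functions
  have hsub : ∀ s ∈ Set.Ici (0:ℝ), Real.sqrt s ∈ Set.Ici (0:ℝ) :=
    fun s _ => Set.mem_Ici.mpr (Real.sqrt_nonneg s)
  have hγfc : ContinuousOn (fun s => f (Real.sqrt s)) (Set.Ici (0:ℝ)) :=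
    hf.comp hsqc hsub
  have hγgc : ContinuousOn (fun s => g (Real.sqrt s)) (Set.Ici (0:ℝ)) :=
    hg.comp hsqc hsub
  -- F and G in terms of A and B
  have himg : ∀ (S : H →L[ℂ] H), (0:H→L[ℂ]H) ≤ S →
      Real.sqrt '' spectrum ℝ S ⊆ Set.Ici (0:ℝ) := by
    rintro S hS - ⟨s, -, rfl⟩
    exact Set.mem_Ici.mpr (Real.sqrt_nonneg s)
  have hFA : cfc (fun t => f t ^ 2) (absOp T) = cfc (fun s => f (Real.sqrt s) ^ 2) A := by
    rw [hPA, ← cfc_comp (fun t => f t ^ 2) Real.sqrt A hAs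
      (((hf.mono (himg A hA)).pow 2)) (hsqc.mono specA)]
    rfl
  have hGB : cfc (fun t => g t ^ 2) (absAdj T) = cfc (fun s => g (Real.sqrt s) ^ 2) B := by
    rw [hQB, ← cfc_comp (fun t => g t ^ 2) Real.sqrt B hBs
      (((hg.mono (himg B hB)).pow 2)) (hsqc.mono specB)]
    rfl
  set rF := (inner ℂ ((cfc (fun t => f t ^ 2) (absOp T)) x) x : ℂ).re with hrF
  set rG := (inner ℂ ((cfc (fun t => g t ^ 2) (absAdj T)) x) x : ℂ).re with hrG
  have hrF0 : 0 ≤ rF := by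
    rw [hrF, hFA]
    exact inner_nonneg_of_nonneg (cfc_nonneg (fun s _ => sq_nonneg _)) x
  have hrG0 : 0 ≤ rG := by
    rw [hrG, hGB]
    exact inner_nonneg_of_nonneg (cfc_nonneg (fun s _ => sq_nonneg _)) x
  -- main ε-estimate
  have main : ∀ ε : ℝ, 0 < ε →
      ‖(inner ℂ (T x) x : ℂ)‖ ≤ Real.sqrt rF * Real.sqrt rG + Real.sqrt ε := by
    intro ε hε
    set ψ : ℝ → ℝ := fun s => (Real.sqrt (s + ε))⁻¹ with hψdef
    set σ' : ℝ → ℝ := fun s => Real.sqrt (s + ε) with hσdef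
    set γf : ℝ → ℝ := fun s => f (Real.sqrt s) with hγfdef
    set γg : ℝ → ℝ := fun s => g (Real.sqrt s) with hγgdef
    have hσc : ContinuousOn σ' (Set.Ici (0:ℝ)) :=
      Real.continuous_sqrt.comp (continuous_add_right ε) |>.continuousOn
    have hsεpos : ∀ s ∈ Set.Ici (0:ℝ), (0:ℝ) < Real.sqrt (s + ε) := by
      intro s hs
      exact Real.sqrt_pos.mpr (by have := Set.mem_Ici.mp hs; linarith)
    have hψc : ContinuousOn ψ (Set.Ici (0:ℝ)) :=
      ContinuousOn.inv₀ hσc (fun s hs => ne_of_gt (hsεpos s hs))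
    set U := T * cfc ψ A with hUdef
    set Eop := cfc (fun s => σ' s - Real.sqrt s) A with hEdef
    -- T = U * cfc σ' A
    have hψσ : cfc ψ A * cfc σ' A = 1 := by
      rw [← cfc_mul ψ σ' A (hψc.mono specA) (hσc.mono specA)]
      calc cfc (fun s => ψ s * σ' s) A
          = cfc (1 : ℝ → ℝ) A := cfc_congr (fun s hs => by
            exact inv_mul_cancel₀ (ne_of_gt (hsεpos s (specA hs))))
        _ = 1 := cfc_one ℝ A
    have eq1 : T = U * cfc σ' A := by
      rw [hUdef, mul_assoc, hψσ, mul_one]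
    -- cfc σ' A = cfc γg A * cfc γf A + Eop
    have hgf : cfc γg A * cfc γf A = cfc Real.sqrt A := by
      rw [← cfc_mul γg γf A (hγgc.mono specA) (hγfc.mono specA)]
      exact cfc_congr (fun s hs => by
        rw [hγgdef, hγfdef]
        dsimp only
        rw [mul_comm]
        exact hfg _ (Real.sqrt_nonneg s))
    have hsubE : cfc (fun s => σ' s - Real.sqrt s) A = cfc σ' A - cfc Real.sqrt A :=
      cfc_sub σ' Real.sqrt A (hσc.mono specA) (hsqc.mono specA)
    have eq2 : cfc σ' A = cfc γg A * cfc γf A + Eop := by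
      rw [hEdef, hsubE, hgf]; abel
    have split : (inner ℂ (T x) x : ℂ)
        = inner ℂ ((cfc γg A) ((cfc γf A) x)) (adjoint U x) + inner ℂ ((U * Eop) x) x := by
      conv_lhs => rw [eq1, eq2, mul_add]
      rw [ContinuousLinearMap.add_apply, inner_add_left]
      congr 1
      rw [show (U * (cfc γg A * cfc γf A)) x = U ((cfc γg A) ((cfc γf A) x)) from rfl]
      exact (adjoint_inner_right U _ x).symm
    have hUadj : adjoint U = cfc ψ A * adjoint T := by
      rw [hUdef, ← star_eq_adjoint, star_mul, (cfc_predicate ψ A).star_eq, star_eq_adjoint]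
    -- term 1
    have hterm1 : ‖(inner ℂ ((cfc γg A) ((cfc γf A) x)) (adjoint U x) : ℂ)‖
        ≤ Real.sqrt rF * Real.sqrt rG := by
      rw [inner_sa_move (cfc_predicate γg A) _ _]
      have hCS : ‖(inner ℂ ((cfc γf A) x) ((cfc γg A) (adjoint U x)) : ℂ)‖
          ≤ ‖(cfc γf A) x‖ * ‖(cfc γg A) (adjoint U x)‖ := by
        skip
        exact norm_inner_le_norm _ _
      refine hCS.trans (mul_le_mul ?_ ?_ (norm_nonneg _) (Real.sqrt_nonneg _))
      · -- ‖cfc γf A x‖ = √rF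
        have hmul : cfc (fun s => γf s * γf s) A = cfc (fun s => f (Real.sqrt s) ^ 2) A :=
          cfc_congr (fun s _ => (pow_two (f (Real.sqrt s))).symm)
        have h1 : ‖(cfc γf A) x‖ ^ 2 = rF := by
          rw [norm_apply_sq (cfc_predicate γf A) x,
            ← cfc_mul γf γf A (hγfc.mono specA) (hγfc.mono specA), hmul, hrF, hFA]
        rw [← h1, Real.sqrt_sq (norm_nonneg _)]
      · -- ‖cfc γg A (U† x)‖ ≤ √rG
        set ρ : ℝ → ℝ := fun s => γg s * ψ s with hρdef
        have hρc : ContinuousOn ρ (Set.Ici (0:ℝ)) := hγgc.mul hψc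
        have hρ2c : ContinuousOn (fun s => ρ s * ρ s) (Set.Ici (0:ℝ)) := hρc.mul hρc
        have hy : (cfc γg A) (adjoint U x) = (cfc ρ A) (adjoint T x) := by
          rw [hUadj]
          rw [show (cfc ψ A * adjoint T) x = (cfc ψ A) (adjoint T x) from rfl]
          rw [show (cfc γg A) ((cfc ψ A) (adjoint T x))
            = (cfc γg A * cfc ψ A) (adjoint T x) from rfl]
          rw [cfc_mul γg ψ A (hγgc.mono specA) (hψc.mono specA)]
        rw [hy]
        have hsq2 : ‖(cfc ρ A) (adjoint T x)‖ ^ 2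
            = (inner ℂ ((cfc (fun s => ρ s * ρ s) A) (adjoint T x)) (adjoint T x) : ℂ).re := by
          rw [norm_apply_sq (cfc_predicate ρ A),
            ← cfc_mul ρ ρ A (hρc.mono specA) (hρc.mono specA)]
        have hiw : (cfc (fun s => ρ s * ρ s) A) (adjoint T x)
            = adjoint T ((cfc (fun s => ρ s * ρ s) B) x) := by
          rw [show (cfc (fun s => ρ s * ρ s) A) (adjoint T x)
            = (cfc (fun s => ρ s * ρ s) A * adjoint T) x from rfl]
          rw [intertwine_adj T _ hρ2c]
          rfl
        have hBmul : B * cfc (fun s => ρ s * ρ s) B = cfc (fun s => s * (ρ s * ρ s)) B := by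
          have h4 : cfc (fun s => s * (ρ s * ρ s)) B
              = cfc (fun s : ℝ => s) B * cfc (fun s => ρ s * ρ s) B :=
            cfc_mul (fun s : ℝ => s) (fun s => ρ s * ρ s) B
              continuous_id.continuousOn (hρ2c.mono specB)
          rw [h4, cfc_id' ℝ B hBs]
        have hD : (inner ℂ ((cfc (fun s => ρ s * ρ s) A) (adjoint T x)) (adjoint T x) : ℂ).re
            = (inner ℂ ((cfc (fun s => s * (ρ s * ρ s)) B) x) x : ℂ).re := by
          rw [hiw, adjoint_inner_left T _ _]
          rw [show T (adjoint T x) = B x from rfl]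
          rw [← inner_sa_move hBs _ x]
          rw [show B ((cfc (fun s => ρ s * ρ s) B) x)
            = (B * cfc (fun s => ρ s * ρ s) B) x from rfl]
          rw [hBmul]
        have hle : cfc (fun s => s * (ρ s * ρ s)) B ≤ cfc (fun s => g (Real.sqrt s) ^ 2) B := by
          refine cfc_mono (fun s hs => ?_)
            ((continuous_id.continuousOn.mul (hρ2c.mono specB)))
            (((hg.mono (himg B hB)).pow 2).comp (hsqc.mono specB)
              (fun s hs => Set.mem_image_of_mem _ hs))
          have hs0 : (0:ℝ) ≤ s := specB hs
          have h1 : (Real.sqrt (s + ε))⁻¹ * (Real.sqrt (s + ε))⁻¹ = (s + ε)⁻¹ := by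
            rw [← mul_inv, Real.mul_self_sqrt (by linarith)]
          have h2 : s * (s + ε)⁻¹ ≤ 1 := by
            rw [← div_eq_mul_inv]
            exact div_le_one_of_le₀ (by linarith) (by linarith)
          have h3 : s * (ρ s * ρ s) = g (Real.sqrt s) ^ 2 * (s * (s + ε)⁻¹) := by
            rw [hρdef]
            dsimp only [hγgdef, hψdef]
            rw [show g (Real.sqrt s) * (Real.sqrt (s+ε))⁻¹ * (g (Real.sqrt s) * (Real.sqrt (s+ε))⁻¹)
              = g (Real.sqrt s) ^ 2 * ((Real.sqrt (s+ε))⁻¹ * (Real.sqrt (s+ε))⁻¹) by ring, h1]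
            ring
          rw [h3]
          nlinarith [sq_nonneg (g (Real.sqrt s))]
        have hfin : ‖(cfc ρ A) (adjoint T x)‖ ^ 2 ≤ rG := by
          rw [hsq2, hD, hrG, hGB]
          exact inner_mono' hle x
        calc ‖(cfc ρ A) (adjoint T x)‖
            = Real.sqrt (‖(cfc ρ A) (adjoint T x)‖ ^ 2) :=
              (Real.sqrt_sq (norm_nonneg _)).symm
          _ ≤ Real.sqrt rG := Real.sqrt_le_sqrt hfin
    -- ‖U‖ ≤ 1
    have hU1 : ‖U‖ ≤ 1 := by
      have hAmul : A * cfc ψ A = cfc (fun s => s * ψ s) A := by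
        have h4 : cfc (fun s => s * ψ s) A = cfc (fun s : ℝ => s) A * cfc ψ A :=
          cfc_mul (fun s : ℝ => s) ψ A continuous_id.continuousOn (hψc.mono specA)
        rw [h4, cfc_id' ℝ A hAs]
      have hUsU : adjoint U * U = cfc (fun s => ψ s * (s * ψ s)) A := by
        rw [hUadj, hUdef]
        calc (cfc ψ A * adjoint T) * (T * cfc ψ A)
            = cfc ψ A * ((adjoint T * T) * cfc ψ A) := by simp only [mul_assoc]
          _ = cfc ψ A * cfc (fun s => s * ψ s) A := by rw [← hAdef, hAmul]
          _ = cfc (fun s => ψ s * (s * ψ s)) A := by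
              rw [cfc_mul ψ (fun s => s * ψ s) A (hψc.mono specA)
                (continuous_id.continuousOn.mul (hψc.mono specA))]
      have hχ1 : cfc (fun s => ψ s * (s * ψ s)) A ≤ 1 := by
        calc cfc (fun s => ψ s * (s * ψ s)) A
            ≤ cfc (1 : ℝ → ℝ) A := by
              refine cfc_mono (fun s hs => ?_)
                (hψc.mono specA |>.mul (continuous_id.continuousOn.mul (hψc.mono specA)))
                continuousOn_const
              have hs0 : (0:ℝ) ≤ s := specA hs
              have h1 : ψ s * (s * ψ s) = s * (s + ε)⁻¹ := by
                simp only [hψdef]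
                rw [show (Real.sqrt (s+ε))⁻¹ * (s * (Real.sqrt (s+ε))⁻¹)
                  = s * ((Real.sqrt (s+ε))⁻¹ * (Real.sqrt (s+ε))⁻¹) by ring,
                  ← mul_inv, Real.mul_self_sqrt (by linarith)]
              rw [h1]
              show s * (s + ε)⁻¹ ≤ (1 : ℝ → ℝ) s
              rw [← div_eq_mul_inv]
              exact div_le_one_of_le₀ (by linarith) (by linarith)
          _ = 1 := cfc_one ℝ A
      refine ContinuousLinearMap.opNorm_le_bound U zero_le_one (fun y => ?_)
      rw [one_mul]
      have h5 : ‖U y‖ ^ 2 = (inner ℂ ((adjoint U * U) y) y : ℂ).re := by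
        rw [show (adjoint U * U) y = adjoint U (U y) from rfl, adjoint_inner_left U _ _,
          ← RCLike.re_to_complex, @inner_self_eq_norm_sq ℂ]
      have h6 : (inner ℂ ((adjoint U * U) y) y : ℂ).re ≤ ‖y‖ ^ 2 := by
        have h9 := inner_mono' (hUsU.le.trans hχ1) y
        simp only [ContinuousLinearMap.one_apply] at h9
        rwa [show ((inner ℂ y y : ℂ)).re = ‖y‖ ^ 2 from by
          rw [← RCLike.re_to_complex, @inner_self_eq_norm_sq ℂ]] at h9
      have h7 : ‖U y‖ ^ 2 ≤ ‖y‖ ^ 2 := h5 ▸ h6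
      nlinarith [norm_nonneg (U y), norm_nonneg y]
    -- error term
    have hEnorm : ‖Eop‖ ≤ Real.sqrt ε := by
      rw [hEdef]
      refine norm_cfc_le (Real.sqrt_nonneg ε) (fun s hs => ?_)
      have hs0 : (0:ℝ) ≤ s := specA hs
      have hle1 : Real.sqrt s ≤ σ' s := Real.sqrt_le_sqrt (by linarith)
      have hle2 : σ' s ≤ Real.sqrt s + Real.sqrt ε := by
        rw [hσdef]
        dsimp only
        calc Real.sqrt (s + ε) ≤ Real.sqrt ((Real.sqrt s + Real.sqrt ε) ^ 2) := by
              apply Real.sqrt_le_sqrt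
              nlinarith [Real.sq_sqrt hs0, Real.sq_sqrt hε.le,
                Real.sqrt_nonneg s, Real.sqrt_nonneg ε]
          _ = Real.sqrt s + Real.sqrt ε := Real.sqrt_sq (by positivity)
      rw [Real.norm_eq_abs, abs_of_nonneg (by linarith)]
      linarith
    have hterm2 : ‖(inner ℂ ((U * Eop) x) x : ℂ)‖ ≤ Real.sqrt ε := by
      skip
      calc ‖(inner ℂ ((U * Eop) x) x : ℂ)‖ ≤ ‖(U * Eop) x‖ * ‖x‖ := norm_inner_le_norm _ _
        _ ≤ (‖U * Eop‖ * ‖x‖) * ‖x‖ := by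
            gcongr
            exact ContinuousLinearMap.le_opNorm _ _
        _ ≤ ((1 : ℝ) * Real.sqrt ε * 1) * 1 := by
            rw [hx]
            gcongr
            exact (ContinuousLinearMap.opNorm_comp_le _ _).trans
              (mul_le_mul hU1 hEnorm (norm_nonneg _) zero_le_one)
        _ = Real.sqrt ε := by ring
    calc ‖(inner ℂ (T x) x : ℂ)‖
        ≤ ‖(inner ℂ ((cfc γg A) ((cfc γf A) x)) (adjoint U x) : ℂ)‖
          + ‖(inner ℂ ((U * Eop) x) x : ℂ)‖ := by
          rw [split]; exact norm_add_le _ _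
      _ ≤ Real.sqrt rF * Real.sqrt rG + Real.sqrt ε := add_le_add hterm1 hterm2
  -- take the limit ε → 0
  have hlim : ‖(inner ℂ (T x) x : ℂ)‖ ≤ Real.sqrt rF * Real.sqrt rG := by
    by_contra hlt
    push_neg at hlt
    set c := ‖(inner ℂ (T x) x : ℂ)‖ with hc
    set d := Real.sqrt rF * Real.sqrt rG with hd
    have hcd : 0 < c - d := by linarith
    have := main (((c - d) / 2) ^ 2) (by positivity)
    rw [Real.sqrt_sq (by linarith)] at this
    linarith
  calc ‖(inner ℂ (T x) x : ℂ)‖ ^ 2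
      ≤ (Real.sqrt rF * Real.sqrt rG) ^ 2 := by
        have h0 : (0:ℝ) ≤ ‖(inner ℂ (T x) x : ℂ)‖ := norm_nonneg _
        nlinarith
    _ = rF * rG := by rw [mul_pow, Real.sq_sqrt hrF0, Real.sq_sqrt hrG0]

private lemma re_inner_smul (r : ℝ) (W : H →L[ℂ] H) (x : H) :
    (inner ℂ ((r • W) x) x : ℂ).re = r * (inner ℂ (W x) x : ℂ).re := by
  rw [ContinuousLinearMap.smul_apply, RCLike.real_smul_eq_coe_smul (K := ℂ), inner_smul_left]
  simp

private lemma re_inner_add (V W : H →L[ℂ] H) (x : H) :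
    (inner ℂ ((V + W) x) x : ℂ).re = (inner ℂ (V x) x : ℂ).re + (inner ℂ (W x) x : ℂ).re := by
  rw [ContinuousLinearMap.add_apply, inner_add_left, Complex.add_re]

private lemma re_inner_le_opNorm (W : H →L[ℂ] H) (x : H) (hx : ‖x‖ = 1) :
    (inner ℂ (W x) x : ℂ).re ≤ ‖W‖ := by
  calc (inner ℂ (W x) x : ℂ).re ≤ ‖(inner ℂ (W x) x : ℂ)‖ := Complex.re_le_norm _
    _ = ‖(inner ℂ (W x) x : ℂ)‖ := rfl
    _ ≤ ‖W x‖ * ‖x‖ := norm_inner_le_norm _ _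
    _ ≤ (‖W‖ * ‖x‖) * ‖x‖ := by gcongr; exact ContinuousLinearMap.le_opNorm _ _
    _ = ‖W‖ := by rw [hx]; ring

open ContinuousLinearMap in
theorem alphaNorm_sq_le_kittaneh (T : H →L[ℂ] H) (α : ℝ) (hα : α ∈ Set.Icc (0:ℝ) 1)
    (f g : ℝ → ℝ) (hf : ContinuousOn f (Set.Ici 0)) (hg : ContinuousOn g (Set.Ici 0))
    (hf0 : ∀ t ≥ (0:ℝ), 0 ≤ f t) (hg0 : ∀ t ≥ (0:ℝ), 0 ≤ g t)
    (hfg : ∀ t ≥ (0:ℝ), f t * g t = t) :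
    (alphaNorm α T)^2 ≤
      ‖(α/4) • (cfc (fun t => f t ^ 4) (absOp T) + cfc (fun t => g t ^ 4) (absAdj T)) +
        (1 - α) • (absOp T ^ 2)‖ +
      (α/2) * ‖reOp (cfc (fun t => f t ^ 2) (absOp T) * cfc (fun t => g t ^ 2) (absAdj T))‖ := by
  obtain ⟨hα0, hα1⟩ := hα
  set P := absOp T with hPdef
  set Q := absAdj T with hQdef
  set F := cfc (fun t => f t ^ 2) P with hFdef
  set G := cfc (fun t => g t ^ 2) Q with hGdef
  set C := (α/4) • (cfc (fun t => f t ^ 4) P + cfc (fun t => g t ^ 4) Q) +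
      (1 - α) • (P ^ 2) with hCdef
  set D := reOp (F * G) with hDdef
  set RHS := ‖C‖ + (α/2) * ‖D‖ with hRHSdef
  have hRHS0 : 0 ≤ RHS := by positivity
  have hA : (0:H →L[ℂ] H) ≤ adjoint T * T := nonneg_sTT T
  have hB : (0:H →L[ℂ] H) ≤ T * adjoint T := nonneg_TTs T
  have hP0 : (0:H →L[ℂ] H) ≤ P := CFC.sqrt_nonneg _
  have hQ0 : (0:H →L[ℂ] H) ≤ Q := CFC.sqrt_nonneg _
  have hPs : IsSelfAdjoint P := hP0.isSelfAdjoint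
  have hQs : IsSelfAdjoint Q := hQ0.isSelfAdjoint
  have specP : spectrum ℝ P ⊆ Set.Ici 0 := fun s hs => spectrum_nonneg_of_nonneg hP0 hs
  have specQ : spectrum ℝ Q ⊆ Set.Ici 0 := fun s hs => spectrum_nonneg_of_nonneg hQ0 hs
  have hFs : IsSelfAdjoint F := cfc_predicate _ P
  have hGs : IsSelfAdjoint G := cfc_predicate _ Q
  have hP2 : P ^ 2 = adjoint T * T := CFC.sq_sqrt _ hA
  have hF4 : cfc (fun t => f t ^ 4) P = F ^ 2 := by
    rw [show (fun t => f t ^ 4) = fun t => (fun s => f s ^ 2) t ^ 2 from funext fun t => by ring]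
    exact cfc_pow (fun s => f s ^ 2) 2 P ((hf.pow 2).mono specP)
  have hG4 : cfc (fun t => g t ^ 4) Q = G ^ 2 := by
    rw [show (fun t => g t ^ 4) = fun t => (fun s => g s ^ 2) t ^ 2 from funext fun t => by ring]
    exact cfc_pow (fun s => g s ^ 2) 2 Q ((hg.pow 2).mono specQ)
  -- the pointwise bound
  have keybound : ∀ x : H, ‖x‖ = 1 →
      α * (‖(inner ℂ (T x) x : ℂ)‖)^2 + (1 - α) * ‖T x‖^2 ≤ RHS := by
    intro x hx
    set rF := (inner ℂ (F x) x : ℂ).re with hrF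
    set rG := (inner ℂ (G x) x : ℂ).re with hrG
    have h1 : (‖(inner ℂ (T x) x : ℂ)‖)^2 ≤ rF * rG :=
      mixed_schwarz T hf hg hfg x hx
    have h2 : ‖T x‖^2 = (inner ℂ ((P ^ 2) x) x : ℂ).re := by
      rw [hP2, show (adjoint T * T) x = adjoint T (T x) from rfl, adjoint_inner_left T _ _,
        ← RCLike.re_to_complex, @inner_self_eq_norm_sq ℂ]
    set S := F + G with hSdef
    have hSs : IsSelfAdjoint S := hFs.add hGs
    have h3 : rF + rG = (inner ℂ (S x) x : ℂ).re := (re_inner_add F G x).symm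
    have h4 : (inner ℂ (S x) x : ℂ).re ^ 2 ≤ (inner ℂ ((S * S) x) x : ℂ).re := by
      have ha : ‖(inner ℂ (S x) x : ℂ)‖ ≤ ‖S x‖ := by
        skip
        calc ‖(inner ℂ (S x) x : ℂ)‖ ≤ ‖S x‖ * ‖x‖ := norm_inner_le_norm _ _
          _ = ‖S x‖ := by rw [hx, mul_one]
      have hb : (inner ℂ (S x) x : ℂ).re ^ 2 ≤ ‖(inner ℂ (S x) x : ℂ)‖ ^ 2 := by
        rw [Complex.sq_norm, Complex.normSq_apply]
        nlinarith [sq_nonneg (inner ℂ (S x) x : ℂ).im]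
      calc (inner ℂ (S x) x : ℂ).re ^ 2 ≤ ‖(inner ℂ (S x) x : ℂ)‖ ^ 2 := hb
        _ ≤ ‖S x‖ ^ 2 := by nlinarith [norm_nonneg (inner ℂ (S x) x : ℂ), norm_nonneg (S x)]
        _ = (inner ℂ ((S * S) x) x : ℂ).re := norm_apply_sq hSs x
    have h5 : S * S = F ^ 2 + G ^ 2 + (F * G + G * F) := by rw [hSdef]; noncomm_ring
    have h6 : F * G + G * F = (2:ℝ) • D := by
      rw [hDdef, reOp, smul_smul]
      norm_num
      rw [← star_eq_adjoint, star_mul, hFs.star_eq, hGs.star_eq]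
    have h7 : (inner ℂ ((S * S) x) x : ℂ).re
        = (inner ℂ ((F ^ 2 + G ^ 2) x) x : ℂ).re + 2 * (inner ℂ (D x) x : ℂ).re := by
      rw [h5, re_inner_add, h6, re_inner_smul]
    have h8 : rF * rG ≤ (1/4) * (inner ℂ ((F ^ 2 + G ^ 2) x) x : ℂ).re
        + (1/2) * (inner ℂ (D x) x : ℂ).re := by
      have h9 : (rF + rG)^2 ≤ (inner ℂ ((F ^ 2 + G ^ 2) x) x : ℂ).re
          + 2 * (inner ℂ (D x) x : ℂ).re := by
        rw [h3]
        exact h4.trans_eq h7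
      nlinarith [sq_nonneg (rF - rG)]
    have h10 : (inner ℂ (C x) x : ℂ).re = (α/4) * ((inner ℂ ((F ^ 2 + G ^ 2) x) x : ℂ).re)
        + (1 - α) * (inner ℂ ((P ^ 2) x) x : ℂ).re := by
      rw [hCdef, re_inner_add, re_inner_smul, re_inner_smul, hF4, hG4]
    have hC1 : (inner ℂ (C x) x : ℂ).re ≤ ‖C‖ := re_inner_le_opNorm C x hx
    have hD1 : (inner ℂ (D x) x : ℂ).re ≤ ‖D‖ := re_inner_le_opNorm D x hx
    have hm1 : α * (‖(inner ℂ (T x) x : ℂ)‖)^2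
        ≤ α * ((1/4) * (inner ℂ ((F ^ 2 + G ^ 2) x) x : ℂ).re
          + (1/2) * (inner ℂ (D x) x : ℂ).re) :=
      mul_le_mul_of_nonneg_left (h1.trans h8) hα0
    have hm2 : (1 - α) * ‖T x‖^2 = (1 - α) * (inner ℂ ((P ^ 2) x) x : ℂ).re := by rw [h2]
    have hm3 : (α/2) * (inner ℂ (D x) x : ℂ).re ≤ (α/2) * ‖D‖ :=
      mul_le_mul_of_nonneg_left hD1 (by linarith)
    calc α * (‖(inner ℂ (T x) x : ℂ)‖)^2 + (1 - α) * ‖T x‖^2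
        ≤ (inner ℂ (C x) x : ℂ).re + (α/2) * (inner ℂ (D x) x : ℂ).re := by
          rw [h10]; linarith
      _ ≤ ‖C‖ + (α/2) * ‖D‖ := by linarith
      _ = RHS := rfl
  -- conclude via sSup
  have hub : ∀ r ∈ {r : ℝ | ∃ x : H, ‖x‖ = 1 ∧
      r = Real.sqrt (α * (‖(inner ℂ (T x) x : ℂ)‖)^2 + (1 - α) * ‖T x‖^2)},
      r ≤ Real.sqrt RHS := by
    rintro r ⟨x, hx, rfl⟩
    exact Real.sqrt_le_sqrt (keybound x hx)
  have hsup : alphaNorm α T ≤ Real.sqrt RHS := by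
    rw [alphaNorm]
    exact Real.sSup_le hub (Real.sqrt_nonneg _)
  have hnn : 0 ≤ alphaNorm α T := by
    rw [alphaNorm]
    apply Real.sSup_nonneg
    rintro r ⟨x, hx, rfl⟩
    exact Real.sqrt_nonneg _
  calc (alphaNorm α T)^2 ≤ Real.sqrt RHS ^ 2 := by nlinarith
    _ = RHS := Real.sq_sqrt hRHS0
end

section
/- (Buzano's inequality) For all vectors x, y, e in a complex Hilbert space with ‖e‖ = 1, 2|⟨x,e⟩⟨e,y⟩| ≤ ‖x‖‖y‖ + |⟨x,y⟩|. -/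
/-- Buzano's inequality. -/
theorem buzano_inequality {H : Type*} [NormedAddCommGroup H] [InnerProductSpace ℂ H]
    (x y e : H) (he : ‖e‖ = 1) :
    2 * ‖(inner ℂ x e : ℂ) * (inner ℂ e y : ℂ)‖ ≤
      ‖x‖ * ‖y‖ + ‖(inner ℂ x y : ℂ)‖ := by
  set z : H := ((2 : ℂ) * inner ℂ e y) • e - y with hz
  have h2 : ‖z‖ ^ 2 = ‖y‖ ^ 2 := by
    rw [hz, @norm_sub_sq ℂ, norm_smul, he, inner_smul_left, mul_one]
    have h1 : (starRingEnd ℂ) ((2 : ℂ) * inner ℂ e y) * inner ℂ e y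
        = ((2 * ‖(inner ℂ e y : ℂ)‖ ^ 2 : ℝ) : ℂ) := by
      rw [map_mul, mul_assoc, Complex.conj_mul']
      push_cast [Complex.sq_norm]
      simp [Complex.normSq_eq_norm_sq, map_ofNat]
    rw [h1]
    simp [norm_mul, ← Complex.ofReal_pow]
    ring
  have hnz : ‖z‖ = ‖y‖ := by
    nlinarith [norm_nonneg z, norm_nonneg y]
  have hcs : ‖(inner ℂ x z : ℂ)‖ ≤ ‖x‖ * ‖y‖ := by
    have := norm_inner_le_norm (𝕜 := ℂ) x z
    simpa [hnz] using this
  have hdecomp : (inner ℂ x z : ℂ) = 2 * inner ℂ e y * inner ℂ x e - inner ℂ x y := by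
    simp [hz, inner_sub_right, inner_smul_right]
  have h1 : 2 * ‖(inner ℂ x e : ℂ) * (inner ℂ e y : ℂ)‖
      = ‖(inner ℂ x z : ℂ) + inner ℂ x y‖ := by
    rw [hdecomp]
    rw [show (2 : ℂ) * inner ℂ e y * inner ℂ x e - inner ℂ x y + inner ℂ x y
        = 2 * (inner ℂ x e * inner ℂ e y) by ring]
    simp [map_mul]
  calc 2 * ‖(inner ℂ x e : ℂ) * (inner ℂ e y : ℂ)‖
      = ‖(inner ℂ x z : ℂ) + inner ℂ x y‖ := h1
    _ ≤ ‖(inner ℂ x z : ℂ)‖ + ‖(inner ℂ x y : ℂ)‖ :=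
        norm_add_le _ _
    _ ≤ ‖x‖ * ‖y‖ + ‖(inner ℂ x y : ℂ)‖ := by linarith
end

section
/- For every bounded linear operator T on a complex Hilbert space and every α ∈ [0,1], w(T)² ≤ (α/4)w²(|T| + i|T*|) + (α/4)w(|T||T*|) + min{‖(1 − 7α/8)|T*|² + (α/8)|T|²‖, ‖(1 − 7α/8)|T|² + (α/8)|T*|²‖}. -/
variable {H : Type*} [NormedAddCommGroup H] [InnerProductSpace ℂ H] [CompleteSpace H]

set_option maxHeartbeats 2000000
set_option synthInstance.maxHeartbeats 1000000
set_option linter.unusedSectionVars false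

namespace BuzanoAux

open ContinuousLinearMap
open scoped InnerProductSpace ComplexConjugate

local notation "𝕃" => WithLp 2 (H × H)
local notation "ε₂" => WithLp.equiv 2 (H × H)

/-- block diagonal operator -/
noncomputable def dgOp (P Q : H →L[ℂ] H) : 𝕃 →L[ℂ] 𝕃 :=
  (WithLp.prodContinuousLinearEquiv 2 ℂ H H).symm.toContinuousLinearMap ∘L
    ((P ∘L ContinuousLinearMap.fst ℂ H H).prod (Q ∘L ContinuousLinearMap.snd ℂ H H)) ∘L
    (WithLp.prodContinuousLinearEquiv 2 ℂ H H).toContinuousLinearMap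

/-- block offdiagonal operator [[0,T*],[T,0]] -/
noncomputable def odOp (T : H →L[ℂ] H) : 𝕃 →L[ℂ] 𝕃 :=
  (WithLp.prodContinuousLinearEquiv 2 ℂ H H).symm.toContinuousLinearMap ∘L
    (((adjoint T) ∘L ContinuousLinearMap.snd ℂ H H).prod (T ∘L ContinuousLinearMap.fst ℂ H H)) ∘L
    (WithLp.prodContinuousLinearEquiv 2 ℂ H H).toContinuousLinearMap

lemma dgOp_apply (P Q : H →L[ℂ] H) (z : 𝕃) : dgOp P Q z = (ε₂).symm (P z.fst, Q z.snd) := rfl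

lemma odOp_apply (T : H →L[ℂ] H) (z : 𝕃) : odOp T z = (ε₂).symm (adjoint T z.snd, T z.fst) := rfl

lemma inner_eq (z w : 𝕃) : ⟪z, w⟫_ℂ = ⟪z.fst, w.fst⟫_ℂ + ⟪z.snd, w.snd⟫_ℂ :=
  WithLp.prod_inner_apply z w

lemma odOp_selfAdjoint (T : H →L[ℂ] H) : IsSelfAdjoint (odOp T) := by
  rw [isSelfAdjoint_iff, star_eq_adjoint, eq_comm, eq_adjoint_iff]
  intro z w
  simp only [odOp_apply, inner_eq, WithLp.equiv_symm_apply, WithLp.toLp_fst, WithLp.toLp_snd,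
    adjoint_inner_left, adjoint_inner_right]
  ring

lemma dgOp_selfAdjoint {P Q : H →L[ℂ] H} (hP : IsSelfAdjoint P) (hQ : IsSelfAdjoint Q) :
    IsSelfAdjoint (dgOp P Q) := by
  rw [isSelfAdjoint_iff, star_eq_adjoint, eq_comm, eq_adjoint_iff]
  intro z w
  rw [isSelfAdjoint_iff, star_eq_adjoint] at hP hQ
  simp only [dgOp_apply, inner_eq, WithLp.equiv_symm_apply, WithLp.toLp_fst, WithLp.toLp_snd]
  nth_rewrite 1 [← hP, ← hQ]
  simp [adjoint_inner_left]

lemma dgOp_nonneg {P Q : H →L[ℂ] H} (hP : 0 ≤ P) (hQ : 0 ≤ Q) : 0 ≤ dgOp P Q := by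
  rw [nonneg_iff_isPositive] at hP hQ ⊢
  refine ⟨(dgOp_selfAdjoint hP.isSelfAdjoint hQ.isSelfAdjoint).isSymmetric, fun z => ?_⟩
  have := hP.re_inner_nonneg_left z.fst
  have := hQ.re_inner_nonneg_left z.snd
  simp only [reApplyInnerSelf, dgOp_apply, inner_eq, WithLp.equiv_symm_apply, WithLp.toLp_fst,
    WithLp.toLp_snd, map_add]
  positivity

lemma sqrt_odOp_sq (T : H →L[ℂ] H) :
    CFC.sqrt (odOp T * odOp T) =
      dgOp (CFC.sqrt (adjoint T * T)) (CFC.sqrt (T * adjoint T)) := by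
  have hP : (0:H →L[ℂ] H) ≤ adjoint T * T := by
    rw [← ContinuousLinearMap.star_eq_adjoint]; exact star_mul_self_nonneg T
  have hQ : (0:H →L[ℂ] H) ≤ T * adjoint T := by
    rw [← ContinuousLinearMap.star_eq_adjoint]; exact mul_star_self_nonneg T
  have heq : dgOp (CFC.sqrt (adjoint T * T)) (CFC.sqrt (T * adjoint T)) *
      dgOp (CFC.sqrt (adjoint T * T)) (CFC.sqrt (T * adjoint T)) = odOp T * odOp T := by
    rw [show dgOp (CFC.sqrt (adjoint T * T)) (CFC.sqrt (T * adjoint T)) *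
        dgOp (CFC.sqrt (adjoint T * T)) (CFC.sqrt (T * adjoint T)) =
      dgOp (CFC.sqrt (adjoint T * T) * CFC.sqrt (adjoint T * T))
        (CFC.sqrt (T * adjoint T) * CFC.sqrt (T * adjoint T)) from rfl,
      CFC.sqrt_mul_sqrt_self _ hP, CFC.sqrt_mul_sqrt_self _ hQ]
    rfl
  exact CFC.sqrt_unique heq (dgOp_nonneg (CFC.sqrt_nonneg _) (CFC.sqrt_nonneg _))

lemma odOp_commute_sqrt (T : H →L[ℂ] H) :
    Commute (odOp T) (CFC.sqrt (odOp T * odOp T)) := by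
  have hR : IsSelfAdjoint (odOp T) := odOp_selfAdjoint T
  have h1 : CFC.sqrt (odOp T * odOp T) = cfc (fun t : ℝ => |t|) (odOp T) := by
    have heq : cfc (fun t : ℝ => |t|) (odOp T) * cfc (fun t : ℝ => |t|) (odOp T)
        = odOp T * odOp T := by
      rw [← cfc_mul _ _ (odOp T)]
      calc cfc (fun t => |t| * |t|) (odOp T) = cfc (fun t : ℝ => t * t) (odOp T) :=
            cfc_congr fun t _ => abs_mul_abs_self t
        _ = odOp T * odOp T := by rw [cfc_mul _ _ (odOp T), cfc_id' ℝ (odOp T)]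
    exact CFC.sqrt_unique heq (cfc_nonneg fun x _ => abs_nonneg x)
  rw [h1]
  have := cfc_commute_cfc (id : ℝ → ℝ) (fun t : ℝ => |t|) (odOp T)
  rwa [cfc_id ℝ (odOp T) hR] at this

lemma intertwine (T : H →L[ℂ] H) : T * absOp T = absAdj T * T := by
  have h := (odOp_commute_sqrt T).eq
  rw [sqrt_odOp_sq] at h
  ext x
  have h3 : (odOp T) ((dgOp (CFC.sqrt (adjoint T * T)) (CFC.sqrt (T * adjoint T)))
      ((ε₂).symm (x, 0))) = (dgOp (CFC.sqrt (adjoint T * T)) (CFC.sqrt (T * adjoint T)))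
      ((odOp T) ((ε₂).symm (x, 0))) := DFunLike.congr_fun h ((ε₂).symm (x, 0))
  simp only [odOp_apply, dgOp_apply, WithLp.equiv_symm_apply, WithLp.toLp_fst, WithLp.toLp_snd,
    map_zero] at h3
  have h4 := congrArg (fun z : 𝕃 => z.snd) h3
  simpa [WithLp.equiv_symm_apply, WithLp.toLp_snd, absOp, absAdj] using h4

/-! ### basic positivity facts -/

lemma adjmul_nonneg (T : H →L[ℂ] H) : (0:H →L[ℂ] H) ≤ adjoint T * T := by
  rw [← ContinuousLinearMap.star_eq_adjoint]; exact star_mul_self_nonneg T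

lemma muladj_nonneg (T : H →L[ℂ] H) : (0:H →L[ℂ] H) ≤ T * adjoint T := by
  rw [← ContinuousLinearMap.star_eq_adjoint]; exact mul_star_self_nonneg T

lemma absOp_nonneg (T : H →L[ℂ] H) : 0 ≤ absOp T := by
  unfold absOp; exact CFC.sqrt_nonneg _

lemma absAdj_nonneg (T : H →L[ℂ] H) : 0 ≤ absAdj T := by
  unfold absAdj; exact CFC.sqrt_nonneg _

lemma absOp_mul_self (T : H →L[ℂ] H) : absOp T * absOp T = adjoint T * T := by
  unfold absOp; exact CFC.sqrt_mul_sqrt_self _ (adjmul_nonneg T)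

lemma absAdj_mul_self (T : H →L[ℂ] H) : absAdj T * absAdj T = T * adjoint T := by
  unfold absAdj; exact CFC.sqrt_mul_sqrt_self _ (muladj_nonneg T)

/-! ### Inner product helpers -/

lemma sa_move {S : H →L[ℂ] H} (hS : IsSelfAdjoint S) (u v : H) :
    ⟪u, S v⟫_ℂ = ⟪S u, v⟫_ℂ := by
  conv_lhs => rw [← hS.adjoint_eq, adjoint_inner_right]

lemma inner_self_re {S : H →L[ℂ] H} (hS : IsSelfAdjoint S) (x : H) :
    ⟪S x, x⟫_ℂ = ((⟪S x, x⟫_ℂ).re : ℂ) := by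
  have h2 : (starRingEnd ℂ) ⟪S x, x⟫_ℂ = ⟪S x, x⟫_ℂ := by
    rw [inner_conj_symm, sa_move hS]
  exact (Complex.conj_eq_iff_re.mp h2).symm

lemma inner_nonneg {S : H →L[ℂ] H} (hS : 0 ≤ S) (x : H) : 0 ≤ (⟪S x, x⟫_ℂ).re := by
  have := ((nonneg_iff_isPositive S).mp hS).re_inner_nonneg_left x
  simpa [RCLike.re_to_complex] using this

lemma quad_le_op_norm (S : H →L[ℂ] H) (x : H) (hx : ‖x‖ = 1) : (⟪S x, x⟫_ℂ).re ≤ ‖S‖ := by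
  calc (⟪S x, x⟫_ℂ).re ≤ ‖⟪S x, x⟫_ℂ‖ := Complex.re_le_norm _
    _ = ‖(⟪S x, x⟫_ℂ)‖ := rfl
    _ ≤ ‖S x‖ * ‖x‖ := norm_inner_le_norm _ _
    _ ≤ (‖S‖ * ‖x‖) * ‖x‖ := by
        have := le_opNorm S x
        nlinarith [norm_nonneg x]
    _ = ‖S‖ := by rw [hx]; ring

lemma inner_quad_le {S S' : H →L[ℂ] H} (h : S ≤ S') (x : H) :
    (⟪S x, x⟫_ℂ).re ≤ (⟪S' x, x⟫_ℂ).re := by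
  rw [ContinuousLinearMap.le_def] at h
  have := h.re_inner_nonneg_left x
  simp only [reApplyInnerSelf, RCLike.re_to_complex, sub_apply, inner_sub_left,
    Complex.sub_re] at this
  linarith

/-! ### norm identities -/

lemma norm_absOp_apply (T : H →L[ℂ] H) (x : H) : ‖absOp T x‖ = ‖T x‖ := by
  have hA : IsSelfAdjoint (absOp T) := (absOp_nonneg T).isSelfAdjoint
  have h : ⟪absOp T x, absOp T x⟫_ℂ = ⟪T x, T x⟫_ℂ := by
    rw [sa_move hA (absOp T x) x]
    have : absOp T (absOp T x) = (adjoint T) (T x) := by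
      rw [← ContinuousLinearMap.mul_apply, absOp_mul_self T, ContinuousLinearMap.mul_apply]
    rw [this, adjoint_inner_left]
  rw [inner_self_eq_norm_sq_to_K, inner_self_eq_norm_sq_to_K] at h
  have h2 : (‖absOp T x‖:ℝ)^2 = ‖T x‖^2 := by exact_mod_cast h
  nlinarith [norm_nonneg (absOp T x), norm_nonneg (T x)]

lemma norm_absAdj_apply (T : H →L[ℂ] H) (x : H) : ‖absAdj T x‖ = ‖adjoint T x‖ := by
  have h := norm_absOp_apply (adjoint T) x
  rw [show absOp (adjoint T) = absAdj T by rw [absOp, absAdj, adjoint_adjoint]] at h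
  exact h

/-! ### numRad basic facts -/

lemma abs_inner_le_numRad (S : H →L[ℂ] H) (x : H) (hx : ‖x‖ = 1) :
    ‖⟪S x, x⟫_ℂ‖ ≤ numRad S := by
  apply le_csSup
  · refine ⟨‖S‖, ?_⟩
    rintro r ⟨y, hy, rfl⟩
    calc ‖⟪S y, y⟫_ℂ‖ = ‖(⟪S y, y⟫_ℂ)‖ := rfl
      _ ≤ ‖S y‖ * ‖y‖ := norm_inner_le_norm _ _
      _ ≤ (‖S‖ * ‖y‖) * ‖y‖ := by
          have := le_opNorm S y
          nlinarith [norm_nonneg y]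
      _ = ‖S‖ := by rw [hy]; ring
  · exact ⟨x, hx, rfl⟩

lemma numRad_nonneg (S : H →L[ℂ] H) : 0 ≤ numRad S := by
  apply Real.sSup_nonneg
  rintro r ⟨y, hy, rfl⟩
  positivity

/-! ### Buzano's inequality -/

lemma buzano (u v e : H) (he : ‖e‖ = 1) :
    ‖⟪u, e⟫_ℂ * ⟪e, v⟫_ℂ‖ ≤ (‖u‖ * ‖v‖ + ‖⟪u, v⟫_ℂ‖) / 2 := by
  set w := (2 * ⟪e, v⟫_ℂ) • e - v with hw_def
  have hw : ‖w‖ = ‖v‖ := by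
    have h1 : ‖w‖^2 = ‖v‖^2 := by
      rw [hw_def, norm_sub_sq (𝕜 := ℂ), inner_smul_left, norm_smul, he, mul_one]
      simp only [map_mul, Complex.conj_ofNat, mul_assoc, Complex.conj_mul', RCLike.re_to_complex,
        map_ofNat, ← Complex.ofReal_pow, Complex.ofReal_re, Complex.sq_norm,
        Complex.mul_re, Complex.re_ofNat, Complex.im_ofNat, Complex.ofReal_im, mul_pow]
      ring_nf
      simp [Complex.sq_norm]
      ring
    nlinarith [norm_nonneg w, norm_nonneg v]
  have hid : ⟪u, w⟫_ℂ = 2 * ⟪u, e⟫_ℂ * ⟪e, v⟫_ℂ - ⟪u, v⟫_ℂ := by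
    rw [hw_def, inner_sub_right, inner_smul_right]
    ring
  have h2 : ‖2 * ⟪u, e⟫_ℂ * ⟪e, v⟫_ℂ - ⟪u, v⟫_ℂ‖ ≤ ‖u‖ * ‖v‖ := by
    rw [← hid]
    calc ‖⟪u, w⟫_ℂ‖ ≤ ‖u‖ * ‖w‖ := norm_inner_le_norm _ _
      _ = ‖u‖ * ‖v‖ := by rw [hw]
  have h3 := norm_add_le (2 * ⟪u, e⟫_ℂ * ⟪e, v⟫_ℂ - ⟪u, v⟫_ℂ) (⟪u, v⟫_ℂ)
  rw [sub_add_cancel] at h3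
  have h4 : ‖2 * ⟪u, e⟫_ℂ * ⟪e, v⟫_ℂ‖ = 2 * ‖⟪u, e⟫_ℂ * ⟪e, v⟫_ℂ‖ := by
    rw [show (2:ℂ) * ⟪u, e⟫_ℂ * ⟪e, v⟫_ℂ = 2 * (⟪u, e⟫_ℂ * ⟪e, v⟫_ℂ) by ring, norm_mul]
    simp
  rw [h4] at h3
  linarith


/-! ### cfc regularization helpers -/

section Reg

variable {S : H →L[ℂ] H} {ε : ℝ}

lemma contOn_inv (hS0 : 0 ≤ S) (hε : 0 < ε) :
    ContinuousOn (fun t : ℝ => (t + ε)⁻¹) (spectrum ℝ S) := by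
  apply ContinuousOn.inv₀ (by fun_prop)
  intro t ht
  have := spectrum_nonneg_of_nonneg hS0 ht
  show t + ε ≠ 0
  exact ne_of_gt (by linarith)

lemma contOn_isqrt (hS0 : 0 ≤ S) (hε : 0 < ε) :
    ContinuousOn (fun t : ℝ => (Real.sqrt (t + ε))⁻¹) (spectrum ℝ S) := by
  apply ContinuousOn.inv₀
  · exact (by exact (Real.continuous_sqrt.comp (by fun_prop)).continuousOn :
      ContinuousOn (fun t : ℝ => Real.sqrt (t + ε)) (spectrum ℝ S))
  intro t ht
  have := spectrum_nonneg_of_nonneg hS0 ht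
  show Real.sqrt (t + ε) ≠ 0
  exact ne_of_gt (Real.sqrt_pos.mpr (by linarith))

lemma contOn_sqrt (S : H →L[ℂ] H) (ε : ℝ) :
    ContinuousOn (fun t : ℝ => Real.sqrt (t + ε)) (spectrum ℝ S) := by
  exact (Real.continuous_sqrt.comp (by fun_prop)).continuousOn

lemma cfc_shift_mul_inv (hS0 : 0 ≤ S) (hε : 0 < ε) :
    cfc (fun t : ℝ => t + ε) S * cfc (fun t : ℝ => (t + ε)⁻¹) S = 1 := by
  rw [← cfc_mul _ _ S (by fun_prop) (contOn_inv hS0 hε)]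
  have h : cfc (fun t : ℝ => (t + ε) * (t + ε)⁻¹) S = cfc (fun _ : ℝ => (1:ℝ)) S := by
    apply cfc_congr
    intro t ht
    have := spectrum_nonneg_of_nonneg hS0 ht
    show (t + ε) * (t + ε)⁻¹ = 1
    exact mul_inv_cancel₀ (ne_of_gt (by linarith))
  rw [h, cfc_const 1 S hS0.isSelfAdjoint, map_one]

lemma cfc_inv_mul_shift (hS0 : 0 ≤ S) (hε : 0 < ε) :
    cfc (fun t : ℝ => (t + ε)⁻¹) S * cfc (fun t : ℝ => t + ε) S = 1 := by
  rw [(cfc_commute_cfc (fun t : ℝ => (t + ε)⁻¹) (fun t : ℝ => t + ε) S).eq]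
  exact cfc_shift_mul_inv hS0 hε

lemma cfc_shift_eq (hS0 : 0 ≤ S) :
    cfc (fun t : ℝ => t + ε) S = S + algebraMap ℝ (H →L[ℂ] H) ε := by
  have h := cfc_add_const ε (fun t : ℝ => t) S (by fun_prop) hS0.isSelfAdjoint
  rwa [cfc_id' ℝ S hS0.isSelfAdjoint] at h

lemma quad_shift (hS0 : 0 ≤ S) (x : H) (hx : ‖x‖ = 1) :
    (⟪(cfc (fun t : ℝ => t + ε) S) x, x⟫_ℂ).re = (⟪S x, x⟫_ℂ).re + ε := by
  rw [cfc_shift_eq hS0, ContinuousLinearMap.add_apply, inner_add_left, Complex.add_re]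
  congr 1
  rw [Algebra.algebraMap_eq_smul_one, ContinuousLinearMap.smul_apply, ContinuousLinearMap.one_apply,
    RCLike.real_smul_eq_coe_smul (K := ℂ), inner_smul_left]
  simp [inner_self_eq_norm_sq_to_K, hx]

lemma cfc_sqrt_mul_self' (hS0 : 0 ≤ S) (hε : 0 < ε) :
    cfc (fun t : ℝ => Real.sqrt (t + ε)) S * cfc (fun t : ℝ => Real.sqrt (t + ε)) S
      = cfc (fun t : ℝ => t + ε) S := by
  rw [← cfc_mul _ _ S (contOn_sqrt S ε) (contOn_sqrt S ε)]
  apply cfc_congr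
  intro t ht
  have := spectrum_nonneg_of_nonneg hS0 ht
  exact Real.mul_self_sqrt (by linarith)

lemma cfc_isqrt_mul_self' (hS0 : 0 ≤ S) (hε : 0 < ε) :
    cfc (fun t : ℝ => (Real.sqrt (t + ε))⁻¹) S * cfc (fun t : ℝ => (Real.sqrt (t + ε))⁻¹) S
      = cfc (fun t : ℝ => (t + ε)⁻¹) S := by
  rw [← cfc_mul _ _ S (contOn_isqrt hS0 hε) (contOn_isqrt hS0 hε)]
  apply cfc_congr
  intro t ht
  have := spectrum_nonneg_of_nonneg hS0 ht
  show (Real.sqrt (t + ε))⁻¹ * (Real.sqrt (t + ε))⁻¹ = (t + ε)⁻¹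
  rw [← mul_inv, Real.mul_self_sqrt (by linarith)]

end Reg

lemma key_le (T : H →L[ℂ] H) {ε : ℝ} (hε : 0 < ε) :
    (adjoint T * T) * cfc (fun t : ℝ => (t + ε)⁻¹) (absOp T)
      ≤ cfc (fun t : ℝ => t + ε) (absOp T) := by
  have hA0 := absOp_nonneg T
  have h1 : cfc (fun t : ℝ => t * t) (absOp T) = adjoint T * T := by
    rw [cfc_mul _ _ (absOp T) (by fun_prop) (by fun_prop), cfc_id' ℝ (absOp T) hA0.isSelfAdjoint,
      absOp_mul_self T]
  rw [← h1, ← cfc_mul _ _ (absOp T) (by fun_prop) (contOn_inv hA0 hε)]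
  refine cfc_mono (fun t ht => ?_) ?_ ?_
  · have h0 := spectrum_nonneg_of_nonneg hA0 ht
    have hpos : 0 < t + ε := by linarith
    show t * t * (t + ε)⁻¹ ≤ t + ε
    rw [← div_eq_mul_inv, div_le_iff₀ hpos]
    nlinarith
  · exact ContinuousOn.mul (by fun_prop) (contOn_inv hA0 hε)
  · fun_prop

lemma intert_inv (T : H →L[ℂ] H) {ε : ℝ} (hε : 0 < ε) :
    T * cfc (fun t : ℝ => (t + ε)⁻¹) (absOp T)
      = cfc (fun t : ℝ => (t + ε)⁻¹) (absAdj T) * T := by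
  have hA0 := absOp_nonneg T
  have hB0 := absAdj_nonneg T
  have hTg : T * cfc (fun t : ℝ => t + ε) (absOp T)
      = cfc (fun t : ℝ => t + ε) (absAdj T) * T := by
    rw [cfc_shift_eq hA0, cfc_shift_eq hB0, mul_add, add_mul, intertwine T,
      Algebra.commutes ε T]
  calc T * cfc (fun t : ℝ => (t + ε)⁻¹) (absOp T)
      = 1 * (T * cfc (fun t : ℝ => (t + ε)⁻¹) (absOp T)) := (one_mul _).symm
    _ = (cfc (fun t : ℝ => (t + ε)⁻¹) (absAdj T) * cfc (fun t : ℝ => t + ε) (absAdj T)) *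
          (T * cfc (fun t : ℝ => (t + ε)⁻¹) (absOp T)) := by rw [cfc_inv_mul_shift hB0 hε]
    _ = cfc (fun t : ℝ => (t + ε)⁻¹) (absAdj T) * ((cfc (fun t : ℝ => t + ε) (absAdj T) * T) *
          cfc (fun t : ℝ => (t + ε)⁻¹) (absOp T)) := by simp only [mul_assoc]
    _ = cfc (fun t : ℝ => (t + ε)⁻¹) (absAdj T) * ((T * cfc (fun t : ℝ => t + ε) (absOp T)) *
          cfc (fun t : ℝ => (t + ε)⁻¹) (absOp T)) := by rw [hTg]
    _ = cfc (fun t : ℝ => (t + ε)⁻¹) (absAdj T) * (T * (cfc (fun t : ℝ => t + ε) (absOp T) *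
          cfc (fun t : ℝ => (t + ε)⁻¹) (absOp T))) := by simp only [mul_assoc]
    _ = cfc (fun t : ℝ => (t + ε)⁻¹) (absAdj T) * T := by
          rw [cfc_shift_mul_inv hA0 hε, mul_one]

lemma mixed_schwarz (T : H →L[ℂ] H) (x : H) (hx : ‖x‖ = 1) :
    ‖⟪T x, x⟫_ℂ‖ ^ 2 ≤ (⟪absOp T x, x⟫_ℂ).re * (⟪absAdj T x, x⟫_ℂ).re := by
  have hA0 := absOp_nonneg T
  have hB0 := absAdj_nonneg T
  have key : ∀ ε : ℝ, 0 < ε →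
      ‖⟪T x, x⟫_ℂ‖ ^ 2 ≤
        ((⟪absOp T x, x⟫_ℂ).re + ε) * ((⟪absAdj T x, x⟫_ℂ).re + ε) := by
    intro ε hε
    set sB := cfc (fun t : ℝ => Real.sqrt (t + ε)) (absAdj T) with hsB_def
    set sB' := cfc (fun t : ℝ => (Real.sqrt (t + ε))⁻¹) (absAdj T) with hsB'_def
    have hsB : IsSelfAdjoint sB :=
      (cfc_nonneg (fun t (_ : t ∈ spectrum ℝ (absAdj T)) => Real.sqrt_nonneg _)).isSelfAdjoint
    have hsB' : IsSelfAdjoint sB' :=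
      (cfc_nonneg (fun t (_ : t ∈ spectrum ℝ (absAdj T)) =>
        inv_nonneg.mpr (Real.sqrt_nonneg _))).isSelfAdjoint
    have hss' : sB * sB' = 1 := by
      rw [hsB_def, hsB'_def, ← cfc_mul _ _ (absAdj T)
        (contOn_sqrt (absAdj T) ε) (contOn_isqrt hB0 hε)]
      have h : cfc (fun t : ℝ => Real.sqrt (t + ε) * (Real.sqrt (t + ε))⁻¹) (absAdj T)
          = cfc (fun _ : ℝ => (1:ℝ)) (absAdj T) := by
        apply cfc_congr
        intro t ht
        have := spectrum_nonneg_of_nonneg hB0 ht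
        exact mul_inv_cancel₀ (ne_of_gt (Real.sqrt_pos.mpr (by linarith)))
      rw [h, cfc_const 1 (absAdj T) hB0.isSelfAdjoint, map_one]
    have hinner : ⟪T x, x⟫_ℂ = ⟪sB' (T x), sB x⟫_ℂ := by
      have h : ⟪sB' (T x), sB x⟫_ℂ = ⟪T x, x⟫_ℂ := by
        rw [sa_move hsB (sB' (T x)) x, ← ContinuousLinearMap.mul_apply, hss',
          ContinuousLinearMap.one_apply]
      exact h.symm
    have h1 : ‖⟪T x, x⟫_ℂ‖ ≤ ‖sB' (T x)‖ * ‖sB x‖ := by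
      rw [hinner]
      exact norm_inner_le_norm _ _
    have hnB : ‖sB x‖ ^ 2 = (⟪absAdj T x, x⟫_ℂ).re + ε := by
      have h2 : ⟪sB x, sB x⟫_ℂ = ⟪(cfc (fun t : ℝ => t + ε) (absAdj T)) x, x⟫_ℂ := by
        rw [sa_move hsB (sB x) x, ← ContinuousLinearMap.mul_apply, cfc_sqrt_mul_self' hB0 hε]
      have h3 : (‖sB x‖:ℝ) ^ 2 = (⟪sB x, sB x⟫_ℂ).re := by
        rw [inner_self_eq_norm_sq_to_K]
        simp [← Complex.ofReal_pow]
      rw [h3, h2, quad_shift hB0 x hx]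
    have hnB' : ‖sB' (T x)‖ ^ 2 ≤ (⟪absOp T x, x⟫_ℂ).re + ε := by
      have h2 : ⟪sB' (T x), sB' (T x)⟫_ℂ
          = ⟪((adjoint T * T) * cfc (fun t : ℝ => (t + ε)⁻¹) (absOp T)) x, x⟫_ℂ := by
        calc ⟪sB' (T x), sB' (T x)⟫_ℂ = ⟪sB' (sB' (T x)), T x⟫_ℂ := sa_move hsB' _ _
          _ = ⟪(cfc (fun t : ℝ => (t + ε)⁻¹) (absAdj T)) (T x), T x⟫_ℂ := by
              rw [← ContinuousLinearMap.mul_apply, cfc_isqrt_mul_self' hB0 hε]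
          _ = ⟪(T * cfc (fun t : ℝ => (t + ε)⁻¹) (absOp T)) x, T x⟫_ℂ := by
              rw [← ContinuousLinearMap.mul_apply, ← intert_inv T hε]
          _ = ⟪T ((cfc (fun t : ℝ => (t + ε)⁻¹) (absOp T)) x), T x⟫_ℂ := by
              rw [ContinuousLinearMap.mul_apply]
          _ = ⟪adjoint T (T ((cfc (fun t : ℝ => (t + ε)⁻¹) (absOp T)) x)), x⟫_ℂ :=
              (adjoint_inner_left T x _).symm
          _ = ⟪((adjoint T * T) * cfc (fun t : ℝ => (t + ε)⁻¹) (absOp T)) x, x⟫_ℂ := rfl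
      have h3 : (‖sB' (T x)‖:ℝ) ^ 2 = (⟪sB' (T x), sB' (T x)⟫_ℂ).re := by
        rw [inner_self_eq_norm_sq_to_K]
        simp [← Complex.ofReal_pow]
      rw [h3, h2]
      calc (⟪((adjoint T * T) * cfc (fun t : ℝ => (t + ε)⁻¹) (absOp T)) x, x⟫_ℂ).re
          ≤ (⟪(cfc (fun t : ℝ => t + ε) (absOp T)) x, x⟫_ℂ).re :=
            inner_quad_le (key_le T hε) x
        _ = (⟪absOp T x, x⟫_ℂ).re + ε := quad_shift hA0 x hx
    calc ‖⟪T x, x⟫_ℂ‖ ^ 2 ≤ (‖sB' (T x)‖ * ‖sB x‖) ^ 2 :=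
          pow_le_pow_left₀ (norm_nonneg _) h1 2
      _ = ‖sB' (T x)‖ ^ 2 * ‖sB x‖ ^ 2 := by ring
      _ ≤ ((⟪absOp T x, x⟫_ℂ).re + ε) * ((⟪absAdj T x, x⟫_ℂ).re + ε) := by
          rw [hnB]
          apply mul_le_mul_of_nonneg_right hnB'
          rw [← hnB]
          positivity
  have hlim : Filter.Tendsto
      (fun ε : ℝ => ((⟪absOp T x, x⟫_ℂ).re + ε) * ((⟪absAdj T x, x⟫_ℂ).re + ε))
      (nhdsWithin 0 (Set.Ioi 0))
      (nhds ((⟪absOp T x, x⟫_ℂ).re * (⟪absAdj T x, x⟫_ℂ).re)) := by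
    have hc : Continuous
        (fun ε : ℝ => ((⟪absOp T x, x⟫_ℂ).re + ε) * ((⟪absAdj T x, x⟫_ℂ).re + ε)) := by
      fun_prop
    have := (hc.tendsto 0).mono_left (nhdsWithin_le_nhds (s := Set.Ioi (0:ℝ)))
    simpa using this
  exact ge_of_tendsto hlim (eventually_nhdsWithin_of_forall fun ε hε => key ε hε)

lemma norm_sq_quad {S : H →L[ℂ] H} (hS : IsSelfAdjoint S) (x : H) :
    ‖S x‖^2 = (⟪(S * S) x, x⟫_ℂ).re := by
  have h : ⟪(S * S) x, x⟫_ℂ = ⟪S x, S x⟫_ℂ := by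
    rw [ContinuousLinearMap.mul_apply, ← sa_move hS (S x) x]
  rw [h, inner_self_eq_norm_sq_to_K]
  simp [← Complex.ofReal_pow]

end BuzanoAux

open ContinuousLinearMap BuzanoAux in
open scoped InnerProductSpace in
theorem numRad_sq_le_buzano (T : H →L[ℂ] H) (α : ℝ) (hα : α ∈ Set.Icc (0:ℝ) 1) :
    (numRad T)^2 ≤
      (α/4) * (numRad (absOp T + Complex.I • absAdj T))^2 +
      (α/4) * numRad (absOp T * absAdj T) +
      min ‖(1 - 7*α/8) • (absAdj T ^ 2) + (α/8) • (absOp T ^ 2)‖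
          ‖(1 - 7*α/8) • (absOp T ^ 2) + (α/8) • (absAdj T ^ 2)‖ := by
  obtain ⟨hα0, hα1⟩ := hα
  set A := absOp T with hA_def
  set B := absAdj T with hB_def
  have hA0 : 0 ≤ A := absOp_nonneg T
  have hB0 : 0 ≤ B := absAdj_nonneg T
  have hA : IsSelfAdjoint A := hA0.isSelfAdjoint
  have hB : IsSelfAdjoint B := hB0.isSelfAdjoint
  set n1 := numRad (A + Complex.I • B) with hn1_def
  set n2 := numRad (A * B) with hn2_def
  set N1 := ‖(1 - 7*α/8) • (B ^ 2) + (α/8) • (A ^ 2)‖ with hN1_def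
  set N2 := ‖(1 - 7*α/8) • (A ^ 2) + (α/8) • (B ^ 2)‖ with hN2_def
  set M := (α/4) * n1^2 + (α/4) * n2 + min N1 N2 with hM_def
  have hn1 : 0 ≤ n1 := numRad_nonneg _
  have hn2 : 0 ≤ n2 := numRad_nonneg _
  have hmin0 : 0 ≤ min N1 N2 := le_min (norm_nonneg _) (norm_nonneg _)
  have hM0 : 0 ≤ M := by positivity
  have key : ∀ x : H, ‖x‖ = 1 → (‖⟪T x, x⟫_ℂ‖)^2 ≤ M := by
    intro x hx
    set a := (⟪A x, x⟫_ℂ).re with ha_def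
    set b := (⟪B x, x⟫_ℂ).re with hb_def
    set m := ‖⟪T x, x⟫_ℂ‖ with hm_def
    have hm0 : 0 ≤ m := norm_nonneg _
    have ha0 : 0 ≤ a := inner_nonneg hA0 x
    have hb0 : 0 ≤ b := inner_nonneg hB0 x
    have hms : m^2 ≤ a * b := mixed_schwarz T x hx
    have hA2x : (⟪(A^2) x, x⟫_ℂ).re = ‖A x‖^2 := by rw [sq]; exact (norm_sq_quad hA x).symm
    have hB2x : (⟪(B^2) x, x⟫_ℂ).re = ‖B x‖^2 := by rw [sq]; exact (norm_sq_quad hB x).symm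
    have hmA : m ≤ ‖A x‖ := by
      rw [show ‖A x‖ = ‖T x‖ from norm_absOp_apply T x, hm_def]
      calc ‖⟪T x, x⟫_ℂ‖ ≤ ‖T x‖ * ‖x‖ := norm_inner_le_norm _ _
        _ = ‖T x‖ := by rw [hx, mul_one]
    have hmB : m ≤ ‖B x‖ := by
      rw [show ‖B x‖ = ‖adjoint T x‖ from norm_absAdj_apply T x, hm_def,
        show ⟪T x, x⟫_ℂ = ⟪x, adjoint T x⟫_ℂ from (adjoint_inner_right T x x).symm]
      calc ‖⟪x, adjoint T x⟫_ℂ‖ ≤ ‖x‖ * ‖adjoint T x‖ := norm_inner_le_norm _ _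
        _ = ‖adjoint T x‖ := by rw [hx, one_mul]
    -- bound via numRad of A + iB
    have hz : ⟪(A + Complex.I • B) x, x⟫_ℂ = (a : ℂ) - Complex.I * (b : ℂ) := by
      rw [ContinuousLinearMap.add_apply, inner_add_left, ContinuousLinearMap.smul_apply,
        inner_smul_left, inner_self_re hA x, inner_self_re hB x]
      simp [Complex.conj_I]
      ring
    have hn1x : a^2 + b^2 ≤ n1^2 := by
      have h7 : a^2 + b^2 = (‖⟪(A + Complex.I • B) x, x⟫_ℂ‖)^2 := by
        rw [hz, Complex.sq_norm, Complex.normSq_apply]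
        simp
        ring
      rw [h7]
      exact pow_le_pow_left₀ (norm_nonneg _) (abs_inner_le_numRad _ x hx) 2
    -- Buzano bound
    have hxB : ⟪x, B x⟫_ℂ = (b:ℂ) := by
      rw [← inner_conj_symm x (B x), inner_self_re hB x, Complex.conj_ofReal]
    have hAxx : ⟪A x, x⟫_ℂ = (a:ℂ) := inner_self_re hA x
    have hab : a * b = ‖(⟪A x, x⟫_ℂ) * (⟪x, B x⟫_ℂ)‖ := by
      rw [hAxx, hxB, ← Complex.ofReal_mul, Complex.norm_real, Real.norm_eq_abs,
        abs_of_nonneg (mul_nonneg ha0 hb0)]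
    have hABx : ‖⟪A x, B x⟫_ℂ‖ ≤ n2 := by
      have h5 : ⟪(A * B) x, x⟫_ℂ = ⟪B x, A x⟫_ℂ := by
        rw [ContinuousLinearMap.mul_apply, ← sa_move hA (B x) x]
      have h6 : ‖⟪A x, B x⟫_ℂ‖ = ‖⟪(A * B) x, x⟫_ℂ‖ := by
        rw [h5, ← inner_conj_symm (B x) (A x), Complex.norm_conj]
      rw [h6]
      exact abs_inner_le_numRad _ x hx
    have hbz2 : a * b ≤ (‖A x‖ * ‖B x‖ + n2)/2 := by
      rw [hab]
      refine (buzano (A x) (B x) x hx).trans ?_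
      linarith [hABx]
    -- quadratic form bounds
    have hq1 : (1 - 7*α/8) * ‖B x‖^2 + (α/8) * ‖A x‖^2 ≤ N1 := by
      have e1 : (⟪((1 - 7*α/8) • (B^2) + (α/8) • (A^2)) x, x⟫_ℂ).re
          = (1 - 7*α/8) * ‖B x‖^2 + (α/8) * ‖A x‖^2 := by
        rw [ContinuousLinearMap.add_apply, inner_add_left, Complex.add_re,
          ContinuousLinearMap.smul_apply, ContinuousLinearMap.smul_apply,
          RCLike.real_smul_eq_coe_smul (K := ℂ), RCLike.real_smul_eq_coe_smul (K := ℂ),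
          inner_smul_left, inner_smul_left]
        simp only [RCLike.conj_ofReal, RCLike.ofReal_alg, Complex.real_smul, mul_one,
          Complex.conj_ofReal, Complex.mul_re, Complex.ofReal_re, Complex.ofReal_im,
          zero_mul, sub_zero]
        rw [hA2x, hB2x]
      rw [← e1]
      exact quad_le_op_norm _ x hx
    have hq2 : (1 - 7*α/8) * ‖A x‖^2 + (α/8) * ‖B x‖^2 ≤ N2 := by
      have e1 : (⟪((1 - 7*α/8) • (A^2) + (α/8) • (B^2)) x, x⟫_ℂ).re
          = (1 - 7*α/8) * ‖A x‖^2 + (α/8) * ‖B x‖^2 := by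
        rw [ContinuousLinearMap.add_apply, inner_add_left, Complex.add_re,
          ContinuousLinearMap.smul_apply, ContinuousLinearMap.smul_apply,
          RCLike.real_smul_eq_coe_smul (K := ℂ), RCLike.real_smul_eq_coe_smul (K := ℂ),
          inner_smul_left, inner_smul_left]
        simp only [RCLike.conj_ofReal, RCLike.ofReal_alg, Complex.real_smul, mul_one,
          Complex.conj_ofReal, Complex.mul_re, Complex.ofReal_re, Complex.ofReal_im,
          zero_mul, sub_zero]
        rw [hA2x, hB2x]
      rw [← e1]
      exact quad_le_op_norm _ x hx
    -- assemble
    have hm2A : m^2 ≤ ‖A x‖^2 := pow_le_pow_left₀ hm0 hmA 2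
    have hm2B : m^2 ≤ ‖B x‖^2 := pow_le_pow_left₀ hm0 hmB 2
    have habsum : a*b ≤ (a^2+b^2)/2 := by nlinarith [sq_nonneg (a-b)]
    have hprod : ‖A x‖*‖B x‖ ≤ (‖A x‖^2 + ‖B x‖^2)/2 := by
      nlinarith [sq_nonneg (‖A x‖ - ‖B x‖)]
    have c1 : α * m^2 ≤ α * (a*b) := mul_le_mul_of_nonneg_left hms hα0
    have c3 : (α/2) * (a*b) ≤ (α/2)*((a^2+b^2)/2) :=
      mul_le_mul_of_nonneg_left habsum (by linarith)
    have c4 : (α/4)*(a^2+b^2) ≤ (α/4)*n1^2 := mul_le_mul_of_nonneg_left hn1x (by linarith)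
    have c5 : (α/2)*(a*b) ≤ (α/2)*((‖A x‖*‖B x‖ + n2)/2) :=
      mul_le_mul_of_nonneg_left hbz2 (by linarith)
    have c6 : (α/4)*(‖A x‖*‖B x‖) ≤ (α/4)*((‖A x‖^2+‖B x‖^2)/2) :=
      mul_le_mul_of_nonneg_left hprod (by linarith)
    have claim1 : m^2 ≤ (α/4)*n1^2 + (α/4)*n2 + N1 := by
      have c2 : (1-α) * m^2 ≤ (1-α) * ‖B x‖^2 :=
        mul_le_mul_of_nonneg_left hm2B (by linarith)
      linarith [c1, c2, c3, c4, c5, c6, hq1]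
    have claim2 : m^2 ≤ (α/4)*n1^2 + (α/4)*n2 + N2 := by
      have c2 : (1-α) * m^2 ≤ (1-α) * ‖A x‖^2 :=
        mul_le_mul_of_nonneg_left hm2A (by linarith)
      linarith [c1, c2, c3, c4, c5, c6, hq2]
    rw [hM_def]
    rcases le_total N1 N2 with h | h
    · rw [min_eq_left h]; exact claim1
    · rw [min_eq_right h]; exact claim2
  have hsup : numRad T ≤ Real.sqrt M := by
    apply Real.sSup_le _ (Real.sqrt_nonneg M)
    rintro r ⟨y, hy, rfl⟩
    rw [Real.le_sqrt (norm_nonneg _) hM0]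
    exact key y hy
  calc (numRad T)^2 ≤ (Real.sqrt M)^2 := pow_le_pow_left₀ (numRad_nonneg T) hsup 2
    _ = M := Real.sq_sqrt hM0
end

section
/- For every bounded linear operator T on a complex Hilbert space, w(T) ≤ √((min over α ∈ [0,1] of ‖α|T| + (1−α)|T*|‖) · ‖T‖) ≤ ‖T‖. -/
variable {H : Type*} [NormedAddCommGroup H] [InnerProductSpace ℂ H] [CompleteSpace H]

set_option synthInstance.maxHeartbeats 1000000
set_option maxHeartbeats 1000000
set_option linter.unusedSectionVars false

open ContinuousLinearMap in
lemma absOp_sq (T : H →L[ℂ] H) : absOp T * absOp T = adjoint T * T := by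
  rw [absOp]
  exact CFC.sqrt_mul_sqrt_self _ (by rw [← star_eq_adjoint]; exact star_mul_self_nonneg T)

open ContinuousLinearMap in
lemma absOp_nonneg (T : H →L[ℂ] H) : 0 ≤ absOp T := CFC.sqrt_nonneg _

open ContinuousLinearMap in
lemma absAdj_eq (T : H →L[ℂ] H) : absAdj T = absOp (adjoint T) := by
  rw [absOp, absAdj, adjoint_adjoint]

open ContinuousLinearMap in
lemma norm_absOp (T : H →L[ℂ] H) : ‖absOp T‖ = ‖T‖ := by
  have hsa : IsSelfAdjoint (absOp T) := .of_nonneg (absOp_nonneg T)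
  have h1 : ‖absOp T‖ * ‖absOp T‖ = ‖T‖ * ‖T‖ := by
    calc ‖absOp T‖ * ‖absOp T‖ = ‖star (absOp T) * absOp T‖ := CStarRing.norm_star_mul_self.symm
      _ = ‖adjoint T * T‖ := by rw [hsa.star_eq, absOp_sq]
      _ = ‖T‖ * ‖T‖ := by rw [← star_eq_adjoint]; exact CStarRing.norm_star_mul_self
  nlinarith [norm_nonneg (absOp T), norm_nonneg T]

open ContinuousLinearMap in
lemma mul_self_le_norm_smul {a : H →L[ℂ] H} (ha : 0 ≤ a) : a * a ≤ ‖a‖ • a := by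
  have hsa : IsSelfAdjoint a := .of_nonneg ha
  set s := CFC.sqrt a with hsdef
  have hs : IsSelfAdjoint s := .of_nonneg (CFC.sqrt_nonneg _)
  have h1 : a ≤ algebraMap ℝ (H →L[ℂ] H) ‖a‖ := hsa.le_algebraMap_norm_self
  have h2 := star_left_conjugate_le_conjugate h1 s
  rw [hs.star_eq] at h2
  have hss : s * s = a := CFC.sqrt_mul_sqrt_self a ha
  calc a * a = s * a * s := by rw [← hss]; simp only [mul_assoc]
    _ ≤ s * algebraMap ℝ (H →L[ℂ] H) ‖a‖ * s := h2
    _ = ‖a‖ • a := by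
        rw [Algebra.algebraMap_eq_smul_one, mul_smul_comm, mul_one, smul_mul_assoc, hss]

open ContinuousLinearMap in
lemma inner_mul_self_le {a : H →L[ℂ] H} (ha : 0 ≤ a) (x : H) :
    Complex.re (inner ℂ ((a * a) x) x : ℂ) ≤ ‖a‖ * Complex.re (inner ℂ (a x) x : ℂ) := by
  have h := (le_def _ _).mp (mul_self_le_norm_smul ha)
  have h2 := h.inner_nonneg_left x
  simp only [sub_apply, inner_sub_left, map_sub, ContinuousLinearMap.smul_apply,
    RCLike.re_to_complex] at h2
  replace h2 := (Complex.le_def.mp h2).1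
  rw [Complex.zero_re, Complex.sub_re] at h2
  have h4 : (inner ℂ ((‖a‖:ℝ) • (a x)) x : ℂ).re = ‖a‖ * (inner ℂ (a x) x : ℂ).re := by
    rw [show ((‖a‖:ℝ) • (a x)) = ((‖a‖:ℂ) • (a x)) from by simp [Complex.real_smul],
      inner_smul_left]
    simp
  rw [h4] at h2
  linarith

lemma re_inner_real_smul (r : ℝ) (y x : H) :
    (inner ℂ (r • y) x : ℂ).re = r * (inner ℂ y x : ℂ).re := by
  rw [show (r • y) = ((r : ℂ) • y) from by simp [Complex.real_smul], inner_smul_left]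
  simp

open ContinuousLinearMap in
lemma abs_inner_sq_le (T : H →L[ℂ] H) (x : H) (hx : ‖x‖ = 1) :
    ‖(inner ℂ (T x) x : ℂ)‖ ^ 2 ≤ ‖T‖ * (inner ℂ (absOp T x) x : ℂ).re := by
  have h1 : ‖(inner ℂ (T x) x : ℂ)‖ ≤ ‖T x‖ := by
    calc ‖(inner ℂ (T x) x : ℂ)‖ = ‖(inner ℂ (T x) x : ℂ)‖ := rfl
      _ ≤ ‖T x‖ * ‖x‖ := norm_inner_le_norm _ _
      _ = ‖T x‖ := by rw [hx, mul_one]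
  have h2 : ‖T x‖ ^ 2 ≤ ‖absOp T‖ * (inner ℂ (absOp T x) x : ℂ).re := by
    have he : ‖T x‖ ^ 2 = ((inner ℂ ((absOp T * absOp T) x) x : ℂ)).re := by
      rw [absOp_sq]
      simpa [RCLike.re_to_complex, ContinuousLinearMap.mul_apply] using
        apply_norm_sq_eq_inner_adjoint_left T x
    rw [he]
    exact inner_mul_self_le (absOp_nonneg T) x
  calc ‖(inner ℂ (T x) x : ℂ)‖ ^ 2 ≤ ‖T x‖ ^ 2 :=
        pow_le_pow_left₀ (norm_nonneg _) h1 2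
    _ ≤ ‖T‖ * (inner ℂ (absOp T x) x : ℂ).re := by rw [← norm_absOp T]; exact h2

open ContinuousLinearMap in
lemma abs_inner_sq_le' (T : H →L[ℂ] H) (x : H) (hx : ‖x‖ = 1) :
    ‖(inner ℂ (T x) x : ℂ)‖ ^ 2 ≤ ‖T‖ * (inner ℂ (absAdj T x) x : ℂ).re := by
  have h := abs_inner_sq_le (adjoint T) x hx
  rw [← absAdj_eq] at h
  have hn : ‖adjoint T‖ = ‖T‖ := by rw [← star_eq_adjoint]; exact norm_star T
  have habs : ‖(inner ℂ ((adjoint T) x) x : ℂ)‖ = ‖(inner ℂ (T x) x : ℂ)‖ := by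
    rw [adjoint_inner_left, ← inner_conj_symm]
    exact Complex.norm_conj _
  rwa [hn, habs] at h

theorem numRad_le_sqrt_inf (T : H →L[ℂ] H) :
    numRad T ≤ Real.sqrt
      ((sInf {r : ℝ | ∃ α ∈ Set.Icc (0:ℝ) 1, r = ‖α • absOp T + (1 - α) • absAdj T‖}) * ‖T‖) ∧
    Real.sqrt
      ((sInf {r : ℝ | ∃ α ∈ Set.Icc (0:ℝ) 1, r = ‖α • absOp T + (1 - α) • absAdj T‖}) * ‖T‖)
      ≤ ‖T‖ := by
  set S : Set ℝ := {r : ℝ | ∃ α ∈ Set.Icc (0:ℝ) 1, r = ‖α • absOp T + (1 - α) • absAdj T‖}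
    with hS
  have hmem : ‖T‖ ∈ S := by
    refine ⟨1, ⟨zero_le_one, le_refl 1⟩, ?_⟩
    norm_num [norm_absOp T]
  have hbdd : BddBelow S := ⟨0, by rintro r ⟨α, -, rfl⟩; exact norm_nonneg _⟩
  have hinf_le : sInf S ≤ ‖T‖ := csInf_le hbdd hmem
  constructor
  · rw [numRad]
    apply Real.sSup_le _ (Real.sqrt_nonneg _)
    rintro r ⟨x, hx, rfl⟩
    have key : ‖(inner ℂ (T x) x : ℂ)‖ ^ 2 ≤ sInf S * ‖T‖ := by
      have hkey : ∀ r ∈ S, ‖(inner ℂ (T x) x : ℂ)‖ ^ 2 ≤ ‖T‖ * r := by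
        rintro r ⟨α, ⟨hα0, hα1⟩, rfl⟩
        have ha := abs_inner_sq_le T x hx
        have hb := abs_inner_sq_le' T x hx
        have hre : (inner ℂ ((α • absOp T + (1 - α) • absAdj T) x) x : ℂ).re
            = α * (inner ℂ (absOp T x) x : ℂ).re + (1 - α) * (inner ℂ (absAdj T x) x : ℂ).re := by
          rw [ContinuousLinearMap.add_apply, inner_add_left, ContinuousLinearMap.smul_apply,
            ContinuousLinearMap.smul_apply, Complex.add_re, re_inner_real_smul,
            re_inner_real_smul]
        have hle : (inner ℂ ((α • absOp T + (1 - α) • absAdj T) x) x : ℂ).re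
            ≤ ‖α • absOp T + (1 - α) • absAdj T‖ := by
          calc (inner ℂ ((α • absOp T + (1 - α) • absAdj T) x) x : ℂ).re
              ≤ ‖(inner ℂ ((α • absOp T + (1 - α) • absAdj T) x) x : ℂ)‖ :=
                Complex.re_le_norm _
            _ ≤ ‖(α • absOp T + (1 - α) • absAdj T) x‖ * ‖x‖ := by
                exact norm_inner_le_norm _ _
            _ ≤ ‖α • absOp T + (1 - α) • absAdj T‖ := by
                rw [hx, mul_one]
                simpa using (α • absOp T + (1 - α) • absAdj T).le_opNorm x |>.trans
                  (by rw [hx, mul_one])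
        nlinarith [mul_le_mul_of_nonneg_left ha hα0,
          mul_le_mul_of_nonneg_left hb (by linarith : (0:ℝ) ≤ 1 - α),
          mul_le_mul_of_nonneg_left (hre ▸ hle) (norm_nonneg T)]
      rcases eq_or_lt_of_le (norm_nonneg T) with h0 | h0
      · have hT0 : T = 0 := by rw [← norm_eq_zero]; exact h0.symm
        have : (inner ℂ (T x) x : ℂ) = 0 := by rw [hT0]; simp
        rw [this]
        simp [← h0]
      · have hdiv : ‖(inner ℂ (T x) x : ℂ)‖ ^ 2 / ‖T‖ ≤ sInf S := by
          apply le_csInf ⟨_, hmem⟩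
          intro r hr
          rw [div_le_iff₀ h0]
          calc ‖(inner ℂ (T x) x : ℂ)‖ ^ 2 ≤ ‖T‖ * r := hkey r hr
            _ = r * ‖T‖ := mul_comm _ _
        calc ‖(inner ℂ (T x) x : ℂ)‖ ^ 2
            = ‖(inner ℂ (T x) x : ℂ)‖ ^ 2 / ‖T‖ * ‖T‖ := by field_simp
          _ ≤ sInf S * ‖T‖ := mul_le_mul_of_nonneg_right hdiv (norm_nonneg T)
    calc ‖(inner ℂ (T x) x : ℂ)‖
        = Real.sqrt (‖(inner ℂ (T x) x : ℂ)‖ ^ 2) :=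
          (Real.sqrt_sq (norm_nonneg _)).symm
      _ ≤ Real.sqrt (sInf S * ‖T‖) := Real.sqrt_le_sqrt key
  · calc Real.sqrt (sInf S * ‖T‖) ≤ Real.sqrt (‖T‖ * ‖T‖) :=
        Real.sqrt_le_sqrt (mul_le_mul_of_nonneg_right hinf_le (norm_nonneg T))
      _ = ‖T‖ := Real.sqrt_mul_self (norm_nonneg T)
end

section
/- For every bounded linear operator T on a complex Hilbert space, w(T) ≥ (1/√2) max{‖Re(T) + Im(T)‖, ‖Re(T) − Im(T)‖}, where Re(T) = (T + T*)/2 and Im(T) = (T − T*)/(2i). -/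
variable {H : Type*} [NormedAddCommGroup H] [InnerProductSpace ℂ H] [CompleteSpace H]

/-- A self-adjoint operator whose numerical values are bounded by `C` has norm at most `C`. -/
lemma myKey (A : H →L[ℂ] H) (hA : ContinuousLinearMap.adjoint A = A) (C : ℝ) (hC : 0 ≤ C)
    (h : ∀ x : H, ‖x‖ = 1 → ‖(inner ℂ (A x) x : ℂ)‖ ≤ C) : ‖A‖ ≤ C := by
  have h' : ∀ x : H, ‖(inner ℂ (A x) x : ℂ)‖ ≤ C * ‖x‖ ^ 2 := by
    intro x
    rcases eq_or_ne x 0 with rfl | hx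
    · simp
    · have hn : (0:ℝ) < ‖x‖ := norm_pos_iff.mpr hx
      have hu : ‖((‖x‖⁻¹ : ℝ) : ℂ) • x‖ = 1 := by
        rw [norm_smul]; simp [abs_of_nonneg (le_of_lt hn), inv_mul_cancel₀ (ne_of_gt hn)]
      have := h _ hu
      rw [map_smul, inner_smul_left, inner_smul_right, ← mul_assoc] at this
      simp only [norm_mul, Complex.norm_real, Real.norm_eq_abs, norm_inv, Complex.norm_conj] at this
      rw [abs_norm] at this
      have h2 := mul_le_mul_of_nonneg_left this (by positivity : (0:ℝ) ≤ ‖x‖ ^ 2)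
      calc ‖(inner ℂ (A x) x : ℂ)‖
          = ‖x‖ ^ 2 * (‖x‖⁻¹ * ‖x‖⁻¹ * ‖(inner ℂ (A x) x : ℂ)‖) := by
            field_simp
        _ ≤ ‖x‖ ^ 2 * C := h2
        _ = C * ‖x‖ ^ 2 := by ring
  have hre : ∀ x y : H, Complex.re (inner ℂ (A x) y : ℂ) ≤ C / 2 * (‖x‖ ^ 2 + ‖y‖ ^ 2) := by
    intro x y
    have hsym : (inner ℂ (A y) x : ℂ) = (starRingEnd ℂ) (inner ℂ (A x) y : ℂ) := by
      rw [← hA, ContinuousLinearMap.adjoint_inner_left, ← inner_conj_symm, hA]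
    have hpol : (inner ℂ (A (x + y)) (x + y) : ℂ) - inner ℂ (A (x - y)) (x - y) =
        2 * ((inner ℂ (A x) y : ℂ) + inner ℂ (A y) x) := by
      simp only [map_add, map_sub, inner_add_left, inner_add_right, inner_sub_left,
        inner_sub_right]
      ring
    have hpol' : (inner ℂ (A (x + y)) (x + y) : ℂ) - inner ℂ (A (x - y)) (x - y) =
        4 * ((Complex.re (inner ℂ (A x) y : ℂ) : ℝ) : ℂ) := by
      rw [hpol, hsym, Complex.add_conj]; push_cast; ring
    have h4 := congrArg Complex.re hpol'
    simp only [Complex.sub_re] at h4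
    rw [show ((4 : ℂ) * ((Complex.re (inner ℂ (A x) y : ℂ) : ℝ) : ℂ)).re
        = 4 * Complex.re (inner ℂ (A x) y : ℂ) by simp] at h4
    have b1 : Complex.re (inner ℂ (A (x+y)) (x+y) : ℂ) ≤ C * ‖x + y‖ ^ 2 :=
      le_trans (Complex.re_le_norm _) (h' _)
    have b2 : -(C * ‖x - y‖ ^ 2) ≤ Complex.re (inner ℂ (A (x-y)) (x-y) : ℂ) := by
      have habs : |Complex.re (inner ℂ (A (x-y)) (x-y) : ℂ)| ≤ C * ‖x - y‖ ^ 2 :=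
        le_trans (Complex.abs_re_le_norm _) (h' _)
      linarith [abs_le.mp habs]
    have hpar : ‖x + y‖ ^ 2 + ‖x - y‖ ^ 2 = 2 * (‖x‖ ^ 2 + ‖y‖ ^ 2) := by
      have := parallelogram_law_with_norm ℂ x y
      nlinarith [this]
    nlinarith [h4, b1, b2]
  refine ContinuousLinearMap.opNorm_le_bound A hC ?_
  intro x
  rcases eq_or_ne (A x) 0 with h0 | h0
  · simp [h0]; positivity
  · have hAx : (0:ℝ) < ‖A x‖ := norm_pos_iff.mpr h0
    have hx0 : (0:ℝ) < ‖x‖ := by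
      rcases eq_or_ne x 0 with rfl | hx
      · exact absurd (by simp) h0
      · exact norm_pos_iff.mpr hx
    set y : H := ((‖x‖ * ‖A x‖⁻¹ : ℝ) : ℂ) • A x with hy
    have hRe : Complex.re (inner ℂ (A x) y : ℂ) = ‖x‖ * ‖A x‖ := by
      rw [hy, inner_smul_right, inner_self_eq_norm_sq_to_K]
      simp [Complex.mul_re]
      norm_cast
      field_simp
    have hny : ‖y‖ = ‖x‖ := by
      rw [hy, norm_smul]
      simp [abs_mul, abs_of_nonneg (le_of_lt hx0), abs_of_nonneg (le_of_lt (inv_pos.mpr hAx))]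
      field_simp
    have := hre x y
    rw [hRe, hny] at this
    nlinarith [this, mul_pos hx0 hAx]

lemma reOp_eq (T : H →L[ℂ] H) :
    reOp T = ((2:ℂ)⁻¹) • (T + ContinuousLinearMap.adjoint T) := by
  unfold reOp
  rw [← algebraMap_smul ℂ ((2:ℝ)⁻¹) (T + ContinuousLinearMap.adjoint T)]
  norm_num

lemma adj_add (T : H →L[ℂ] H) :
    ContinuousLinearMap.adjoint (reOp T + imOp T) = reOp T + imOp T := by
  rw [← ContinuousLinearMap.star_eq_adjoint, reOp_eq]
  unfold imOp
  simp only [star_add, star_smul, star_sub, ContinuousLinearMap.star_eq_adjoint,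
    ContinuousLinearMap.adjoint_adjoint]
  have hc : star ((2 * Complex.I)⁻¹) = -(2 * Complex.I)⁻¹ := by
    simp [Complex.ext_iff]
  have hc2 : star ((2 : ℂ)⁻¹) = (2:ℂ)⁻¹ := by simp [Complex.ext_iff]
  rw [hc, hc2]
  module

lemma adj_sub (T : H →L[ℂ] H) :
    ContinuousLinearMap.adjoint (reOp T - imOp T) = reOp T - imOp T := by
  rw [← ContinuousLinearMap.star_eq_adjoint, reOp_eq]
  unfold imOp
  simp only [star_sub, star_smul, star_add, ContinuousLinearMap.star_eq_adjoint,
    ContinuousLinearMap.adjoint_adjoint]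
  have hc : star ((2 * Complex.I)⁻¹) = -(2 * Complex.I)⁻¹ := by
    simp [Complex.ext_iff]
  have hc2 : star ((2 : ℂ)⁻¹) = (2:ℂ)⁻¹ := by simp [Complex.ext_iff]
  rw [hc, hc2]
  module

lemma inner_add_eq (T : H →L[ℂ] H) (x : H) :
    (inner ℂ ((reOp T + imOp T) x) x : ℂ) =
      (((inner ℂ (T x) x : ℂ).re - (inner ℂ (T x) x : ℂ).im : ℝ) : ℂ) := by
  set z : ℂ := inner ℂ (T x) x with hz
  rw [ContinuousLinearMap.add_apply, inner_add_left, reOp_eq]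
  unfold imOp
  simp only [ContinuousLinearMap.smul_apply, ContinuousLinearMap.add_apply,
    ContinuousLinearMap.sub_apply, inner_add_left, inner_sub_left, inner_smul_left,
    ContinuousLinearMap.adjoint_inner_left]
  rw [← inner_conj_symm x (T x), ← hz]
  have h1 : ((2 * Complex.I)⁻¹ : ℂ) = -(2⁻¹) * Complex.I := by
    simp [Complex.ext_iff]
  rw [h1]
  simp only [map_mul, map_neg, map_inv₀, Complex.conj_I, Complex.conj_ofNat]
  simp [Complex.ext_iff, Complex.mul_re, Complex.mul_im]
  ring

lemma inner_sub_eq (T : H →L[ℂ] H) (x : H) :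
    (inner ℂ ((reOp T - imOp T) x) x : ℂ) =
      (((inner ℂ (T x) x : ℂ).re + (inner ℂ (T x) x : ℂ).im : ℝ) : ℂ) := by
  set z : ℂ := inner ℂ (T x) x with hz
  rw [ContinuousLinearMap.sub_apply, inner_sub_left, reOp_eq]
  unfold imOp
  simp only [ContinuousLinearMap.smul_apply, ContinuousLinearMap.add_apply,
    ContinuousLinearMap.sub_apply, inner_add_left, inner_sub_left, inner_smul_left,
    ContinuousLinearMap.adjoint_inner_left]
  rw [← inner_conj_symm x (T x), ← hz]
  have h1 : ((2 * Complex.I)⁻¹ : ℂ) = -(2⁻¹) * Complex.I := by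
    simp [Complex.ext_iff]
  rw [h1]
  simp only [map_mul, map_neg, map_inv₀, Complex.conj_I, Complex.conj_ofNat]
  simp [Complex.ext_iff, Complex.mul_re, Complex.mul_im]
  ring

lemma sqrt_two_bound (a b : ℝ) : |a - b| ≤ Real.sqrt 2 * Real.sqrt (a * a + b * b) := by
  rw [← Real.sqrt_mul (by norm_num : (0:ℝ) ≤ 2), ← Real.sqrt_sq_eq_abs]
  apply Real.sqrt_le_sqrt
  nlinarith [sq_nonneg (a + b)]

theorem numRad_ge_sum_diff (T : H →L[ℂ] H) :
    numRad T ≥ (Real.sqrt 2)⁻¹ * max ‖reOp T + imOp T‖ ‖reOp T - imOp T‖ := by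
  have hs2 : (0:ℝ) < Real.sqrt 2 := Real.sqrt_pos.mpr (by norm_num)
  -- properties of numRad
  set S : Set ℝ := {r : ℝ | ∃ x : H, ‖x‖ = 1 ∧ r = ‖(inner ℂ (T x) x : ℂ)‖} with hS
  have hbdd : BddAbove S := by
    refine ⟨‖T‖, ?_⟩
    rintro r ⟨x, hx, rfl⟩
    calc ‖(inner ℂ (T x) x : ℂ)‖ = ‖(inner ℂ (T x) x : ℂ)‖ := rfl
      _ ≤ ‖T x‖ * ‖x‖ := norm_inner_le_norm _ _
      _ ≤ ‖T‖ * ‖x‖ * ‖x‖ := by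
          have := T.le_opNorm x
          nlinarith [norm_nonneg x]
      _ = ‖T‖ := by rw [hx]; ring
  have hmem : ∀ x : H, ‖x‖ = 1 → ‖(inner ℂ (T x) x : ℂ)‖ ≤ numRad T := by
    intro x hx
    exact le_csSup hbdd ⟨x, hx, rfl⟩
  have hnn : 0 ≤ numRad T := by
    apply Real.sSup_nonneg
    rintro r ⟨x, hx, rfl⟩
    exact norm_nonneg _
  have hC : 0 ≤ Real.sqrt 2 * numRad T := mul_nonneg (le_of_lt hs2) hnn
  -- the two norm bounds
  have hb : ∀ x : H, ‖x‖ = 1 → ‖(inner ℂ (T x) x : ℂ)‖ ≤ numRad T →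
      |(inner ℂ (T x) x : ℂ).re - (inner ℂ (T x) x : ℂ).im| ≤ Real.sqrt 2 * numRad T ∧
      |(inner ℂ (T x) x : ℂ).re + (inner ℂ (T x) x : ℂ).im| ≤ Real.sqrt 2 * numRad T := by
    intro x hx habs
    set z : ℂ := inner ℂ (T x) x with hz
    have habs' : ‖z‖ = Real.sqrt (z.re * z.re + z.im * z.im) := by
      rw [Complex.norm_def, Complex.normSq_apply]
    constructor
    · calc |z.re - z.im| ≤ Real.sqrt 2 * Real.sqrt (z.re * z.re + z.im * z.im) :=
            sqrt_two_bound _ _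
        _ = Real.sqrt 2 * ‖z‖ := by rw [habs']
        _ ≤ Real.sqrt 2 * numRad T := by
            exact mul_le_mul_of_nonneg_left habs (le_of_lt hs2)
    · have := sqrt_two_bound z.re (-z.im)
      simp only [sub_neg_eq_add, neg_mul, mul_neg, neg_neg] at this
      calc |z.re + z.im| ≤ Real.sqrt 2 * Real.sqrt (z.re * z.re + z.im * z.im) := this
        _ = Real.sqrt 2 * ‖z‖ := by rw [habs']
        _ ≤ Real.sqrt 2 * numRad T := by
            exact mul_le_mul_of_nonneg_left habs (le_of_lt hs2)
  have n1 : ‖reOp T + imOp T‖ ≤ Real.sqrt 2 * numRad T := by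
    apply myKey _ (adj_add T) _ hC
    intro x hx
    rw [inner_add_eq T x]
    rw [Complex.norm_real, Real.norm_eq_abs]
    exact (hb x hx (hmem x hx)).1
  have n2 : ‖reOp T - imOp T‖ ≤ Real.sqrt 2 * numRad T := by
    apply myKey _ (adj_sub T) _ hC
    intro x hx
    rw [inner_sub_eq T x]
    rw [Complex.norm_real, Real.norm_eq_abs]
    exact (hb x hx (hmem x hx)).2
  have hmax : max ‖reOp T + imOp T‖ ‖reOp T - imOp T‖ ≤ Real.sqrt 2 * numRad T :=
    max_le n1 n2
  calc (Real.sqrt 2)⁻¹ * max ‖reOp T + imOp T‖ ‖reOp T - imOp T‖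
      ≤ (Real.sqrt 2)⁻¹ * (Real.sqrt 2 * numRad T) :=
        mul_le_mul_of_nonneg_left hmax (by positivity)
    _ = numRad T := by field_simp
end

section
/- Let T be an (α,β)-normal operator on a complex Hilbert space, where 0 ≤ α ≤ 1 ≤ β. Then w(T)² ≥ max{1 + α², 1 + 1/β²}·‖T‖²/4 + |‖Re(T)‖² − ‖Im(T)‖²|/2. -/
variable {H : Type*} [NormedAddCommGroup H] [InnerProductSpace ℂ H] [CompleteSpace H]

open ContinuousLinearMap in
lemma bddAbove_numRadSet (T : H →L[ℂ] H) :
    BddAbove {r : ℝ | ∃ x : H, ‖x‖ = 1 ∧ r = ‖(inner ℂ (T x) x : ℂ)‖} := by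
  refine ⟨‖T‖, ?_⟩
  rintro r ⟨x, hx, rfl⟩
  calc ‖(inner ℂ (T x) x : ℂ)‖ = ‖(inner ℂ (T x) x : ℂ)‖ := rfl
    _ ≤ ‖T x‖ * ‖x‖ := norm_inner_le_norm _ _
    _ ≤ (‖T‖ * ‖x‖) * ‖x‖ := by gcongr; exact T.le_opNorm x
    _ = ‖T‖ := by rw [hx]; ring

lemma numRad_nonneg (T : H →L[ℂ] H) : 0 ≤ numRad T := by
  apply Real.sSup_nonneg
  rintro r ⟨x, hx, rfl⟩
  exact norm_nonneg _

lemma abs_inner_le_numRad (T : H →L[ℂ] H) (z : H) :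
    ‖(inner ℂ (T z) z : ℂ)‖ ≤ numRad T * ‖z‖^2 := by
  rcases eq_or_ne z 0 with rfl | hz
  · simp
  · have hz' : (0:ℝ) < ‖z‖ := norm_pos_iff.mpr hz
    set u : H := ((‖z‖⁻¹ : ℝ) : ℂ) • z with hu
    have hu1 : ‖u‖ = 1 := by
      rw [hu, norm_smul]
      simp [abs_of_nonneg (le_of_lt (inv_pos.mpr hz'))]
      field_simp
    have hle : ‖(inner ℂ (T u) u : ℂ)‖ ≤ numRad T :=
      le_csSup (bddAbove_numRadSet T) ⟨u, hu1, rfl⟩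
    have hinner : (inner ℂ (T u) u : ℂ) = ((‖z‖⁻¹ : ℝ) : ℂ)^2 * (inner ℂ (T z) z : ℂ) := by
      rw [hu, map_smul, inner_smul_left, inner_smul_right, Complex.conj_ofReal, sq]
      ring
    have habs : ‖(inner ℂ (T u) u : ℂ)‖
        = (‖z‖⁻¹)^2 * ‖(inner ℂ (T z) z : ℂ)‖ := by
      rw [hinner, norm_mul, norm_pow, Complex.norm_real, Real.norm_eq_abs,
        abs_of_nonneg (le_of_lt (inv_pos.mpr hz'))]
    rw [habs] at hle
    have h2 : ‖(inner ℂ (T z) z : ℂ)‖ = ‖z‖^2 * ((‖z‖⁻¹)^2 * ‖(inner ℂ (T z) z : ℂ)‖) := by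
      field_simp
    rw [h2, mul_comm (numRad T) (‖z‖^2)]
    exact mul_le_mul_of_nonneg_left hle (by positivity)

open ContinuousLinearMap in
lemma opNorm_le_of_abs_inner_le {A : H →L[ℂ] H} (hA : IsSelfAdjoint A) {M : ℝ} (hM : 0 ≤ M)
    (h : ∀ z : H, ‖(inner ℂ (A z) z : ℂ)‖ ≤ M * ‖z‖^2) : ‖A‖ ≤ M := by
  refine opNorm_le_bound _ hM fun x => ?_
  rcases eq_or_ne (A x) 0 with hAx | hAx
  · rw [hAx, norm_zero]; positivity
  have hx : x ≠ 0 := by rintro rfl; simp at hAx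
  have hxpos : (0:ℝ) < ‖x‖ := norm_pos_iff.mpr hx
  have hAxpos : (0:ℝ) < ‖A x‖ := norm_pos_iff.mpr hAx
  set y : H := ((‖x‖ / ‖A x‖ : ℝ) : ℂ) • A x with hy
  have hyn : ‖y‖ = ‖x‖ := by
    rw [hy, norm_smul]
    simp [abs_of_nonneg (by positivity : (0:ℝ) ≤ ‖x‖ / ‖A x‖)]
    field_simp
  have hreal : (‖x‖ / ‖A x‖) * (‖A x‖^2) = ‖x‖ * ‖A x‖ := by
    field_simp [hAxpos.ne']
  have h5 : (inner ℂ (A x) (A x) : ℂ).re = ‖A x‖^2 := inner_self_eq_norm_sq (𝕜 := ℂ) (A x)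
  have hre : (inner ℂ (A x) y : ℂ).re = ‖x‖ * ‖A x‖ := by
    rw [hy, inner_smul_right, Complex.re_ofReal_mul, h5]
    exact hreal
  have e1 : (inner ℂ (A (x+y)) (x+y) : ℂ).re - (inner ℂ (A (x-y)) (x-y) : ℂ).re
      = 2 * (inner ℂ (A x) y : ℂ).re + 2 * (inner ℂ (A y) x : ℂ).re := by
    simp only [map_add, map_sub, inner_add_left, inner_add_right, inner_sub_left,
      inner_sub_right, Complex.sub_re, Complex.add_re]
    ring
  have e2 : (inner ℂ (A y) x : ℂ).re = (inner ℂ (A x) y : ℂ).re := by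
    have h1 : (inner ℂ (A y) x : ℂ) = (inner ℂ y (A x) : ℂ) := by
      conv_lhs => rw [← hA.adjoint_eq]
      exact ContinuousLinearMap.adjoint_inner_left A x y
    have h2 : (inner ℂ y (A x) : ℂ) = (starRingEnd ℂ) (inner ℂ (A x) y : ℂ) :=
      (inner_conj_symm _ _).symm
    rw [h1, h2, Complex.conj_re]
  have hb1 : (inner ℂ (A (x+y)) (x+y) : ℂ).re ≤ M * ‖x+y‖^2 :=
    le_trans (Complex.re_le_norm _) (h _)
  have hb2 : -(M * ‖x-y‖^2) ≤ (inner ℂ (A (x-y)) (x-y) : ℂ).re := by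
    have h6 : |(inner ℂ (A (x-y)) (x-y) : ℂ).re| ≤ M * ‖x-y‖^2 :=
      le_trans (Complex.abs_re_le_norm _) (h (x-y))
    linarith [(abs_le.mp h6).1]
  have hpar : ‖x+y‖^2 + ‖x-y‖^2 = 2 * (‖x‖^2 + ‖y‖^2) := by
    have := parallelogram_law_with_norm ℂ x y
    rw [sq, sq, sq, sq]; linarith
  have hkey : 4 * ((inner ℂ (A x) y : ℂ)).re ≤ 4 * (M * ‖x‖^2) := by
    have h4 : 4 * ((inner ℂ (A x) y : ℂ)).re
        = (inner ℂ (A (x+y)) (x+y) : ℂ).re - (inner ℂ (A (x-y)) (x-y) : ℂ).re := by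
      rw [e1, e2]; ring
    have hstep : (inner ℂ (A (x+y)) (x+y) : ℂ).re - (inner ℂ (A (x-y)) (x-y) : ℂ).re
        ≤ M * ‖x+y‖^2 + M * ‖x-y‖^2 := by linarith
    calc 4 * ((inner ℂ (A x) y : ℂ)).re ≤ M * ‖x+y‖^2 + M * ‖x-y‖^2 := by rw [h4]; exact hstep
      _ = M * (‖x+y‖^2 + ‖x-y‖^2) := by ring
      _ = M * (2 * (‖x‖^2 + ‖y‖^2)) := by rw [hpar]
      _ = 4 * (M * ‖x‖^2) := by rw [hyn]; ring
  rw [hre] at hkey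
  nlinarith

lemma isSelfAdjoint_reOp (T : H →L[ℂ] H) : IsSelfAdjoint (reOp T) := by
  rw [IsSelfAdjoint]
  unfold reOp
  rw [star_smul, star_trivial, star_add, ContinuousLinearMap.star_eq_adjoint,
    ContinuousLinearMap.star_eq_adjoint, ContinuousLinearMap.adjoint_adjoint, add_comm]

lemma isSelfAdjoint_imOp (T : H →L[ℂ] H) : IsSelfAdjoint (imOp T) := by
  rw [IsSelfAdjoint]
  unfold imOp
  rw [star_smul, star_sub, ContinuousLinearMap.star_eq_adjoint,
    ContinuousLinearMap.star_eq_adjoint, ContinuousLinearMap.adjoint_adjoint]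
  have hc : star ((2 * Complex.I)⁻¹ : ℂ) = -(2 * Complex.I)⁻¹ := by
    simp only [star_inv₀, star_mul', Complex.star_def, Complex.conj_I, map_ofNat,
      mul_comm, neg_mul, mul_neg, inv_neg]
  rw [hc, neg_smul, ← smul_neg, neg_sub]

lemma inner_reOp (T : H →L[ℂ] H) (z : H) :
    (inner ℂ ((reOp T) z) z : ℂ) = (((inner ℂ (T z) z : ℂ)).re : ℂ) := by
  have happ : (reOp T) z = ((2:ℂ)⁻¹) • (T z + ContinuousLinearMap.adjoint T z) := by
    rw [reOp]
    have : ((2:ℝ)⁻¹ • (T + ContinuousLinearMap.adjoint T)) z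
        = (2:ℝ)⁻¹ • (T z + ContinuousLinearMap.adjoint T z) := rfl
    rw [this, ← Complex.coe_smul]
    norm_num
  have hadj : (inner ℂ (ContinuousLinearMap.adjoint T z) z : ℂ)
      = (starRingEnd ℂ) (inner ℂ (T z) z : ℂ) := by
    rw [ContinuousLinearMap.adjoint_inner_left, ← inner_conj_symm]
  rw [happ, inner_smul_left, inner_add_left, hadj]
  have hconj : (starRingEnd ℂ) ((2:ℂ)⁻¹) = (2:ℂ)⁻¹ := by
    simp only [map_inv₀, map_ofNat]
  rw [hconj]
  set w : ℂ := (inner ℂ (T z) z : ℂ)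
  rw [Complex.add_conj]
  push_cast
  ring

lemma inner_imOp (T : H →L[ℂ] H) (z : H) :
    (inner ℂ ((imOp T) z) z : ℂ) = ((-((inner ℂ (T z) z : ℂ)).im : ℝ) : ℂ) := by
  have happ : (imOp T) z = ((2 * Complex.I)⁻¹ : ℂ) • (T z - ContinuousLinearMap.adjoint T z) := rfl
  have hadj : (inner ℂ (ContinuousLinearMap.adjoint T z) z : ℂ)
      = (starRingEnd ℂ) (inner ℂ (T z) z : ℂ) := by
    rw [ContinuousLinearMap.adjoint_inner_left, ← inner_conj_symm]
  rw [happ, inner_smul_left, inner_sub_left, hadj]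
  have hc : (starRingEnd ℂ) ((2 * Complex.I)⁻¹ : ℂ) = -(2 * Complex.I)⁻¹ := by
    simp only [map_inv₀, map_mul, map_ofNat, Complex.conj_I, mul_neg, inv_neg]
  rw [hc]
  set w : ℂ := (inner ℂ (T z) z : ℂ)
  rw [Complex.sub_conj]
  push_cast
  have hI : (Complex.I : ℂ) ≠ 0 := Complex.I_ne_zero
  field_simp

set_option maxHeartbeats 1000000 in
open ContinuousLinearMap in
lemma reOp_sq_add_imOp_sq (T : H →L[ℂ] H) :
    reOp T * reOp T + imOp T * imOp T
      = (2:ℝ)⁻¹ • (adjoint T * T + T * adjoint T) := by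
  have h2 : ((2:ℝ)⁻¹ • (T + adjoint T)) = ((2:ℂ)⁻¹ • (T + adjoint T)) := by
    rw [← Complex.coe_smul]; norm_num
  have h2' : ((2:ℝ)⁻¹ • (adjoint T * T + T * adjoint T))
      = ((2:ℂ)⁻¹ • (adjoint T * T + T * adjoint T)) := by
    rw [← Complex.coe_smul]; norm_num
  rw [reOp, imOp, h2, h2', smul_mul_smul_comm, smul_mul_smul_comm]
  have c1 : ((2:ℂ)⁻¹ * (2:ℂ)⁻¹) = (4:ℂ)⁻¹ := by norm_num
  have c2 : (((2 * Complex.I)⁻¹ : ℂ) * ((2 * Complex.I)⁻¹ : ℂ)) = -(4:ℂ)⁻¹ := by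
    field_simp
    rw [Complex.I_sq]
    norm_num
  rw [c1, c2, neg_smul]
  rw [mul_add, add_mul, add_mul, mul_sub, sub_mul, sub_mul]
  module

set_option maxHeartbeats 800000 in
set_option synthInstance.maxHeartbeats 400000 in
open ContinuousLinearMap in
lemma isPositive_smul_of_nonneg {r : ℝ} (hr : 0 ≤ r) {S : H →L[ℂ] H} (hS : 0 ≤ S) :
    0 ≤ r • S := by
  rw [nonneg_iff_isPositive] at hS ⊢
  have hsa : IsSelfAdjoint (r • S) := by
    rw [IsSelfAdjoint, star_smul, star_trivial, hS.isSelfAdjoint.star_eq]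
  refine ⟨isSelfAdjoint_iff_isSymmetric.mp hsa, fun x => ?_⟩
  have happ : (r • S) x = ((r : ℝ) : ℂ) • S x := by
    rw [← Complex.coe_smul]; rfl
  have h7 : (r • S).reApplyInnerSelf x = r * S.reApplyInnerSelf x := by
    rw [reApplyInnerSelf_apply, reApplyInnerSelf_apply, happ, inner_smul_left,
      Complex.conj_ofReal]
    exact Complex.re_ofReal_mul _ _
  rw [h7]
  exact mul_nonneg hr (hS.2 x)

set_option maxHeartbeats 800000 in
set_option synthInstance.maxHeartbeats 400000 in
open ContinuousLinearMap in
lemma smul_le_smul_op {r : ℝ} (hr : 0 ≤ r) {A B : H →L[ℂ] H} (hAB : A ≤ B) :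
    r • A ≤ r • B := by
  rw [le_def] at hAB ⊢
  rw [← smul_sub]
  rw [← nonneg_iff_isPositive] at hAB ⊢
  exact isPositive_smul_of_nonneg hr hAB

set_option maxHeartbeats 1600000 in
set_option synthInstance.maxHeartbeats 400000 in
open ContinuousLinearMap in
theorem numRad_sq_ge_of_alphaBetaNormal (T : H →L[ℂ] H) (α β : ℝ)
    (hα0 : 0 ≤ α) (hα1 : α ≤ 1) (hβ : 1 ≤ β)
    (h1 : (α^2 : ℝ) • (ContinuousLinearMap.adjoint T * T) ≤ T * ContinuousLinearMap.adjoint T)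
    (h2 : T * ContinuousLinearMap.adjoint T ≤ (β^2 : ℝ) • (ContinuousLinearMap.adjoint T * T)) :
    (numRad T)^2 ≥ max (1 + α^2) (1 + 1/β^2) * ‖T‖^2 / 4 +
      |‖reOp T‖^2 - ‖imOp T‖^2| / 2 := by
  have hβ0 : (0:ℝ) < β ^ 2 := by positivity
  set R := reOp T with hR
  set Im := imOp T with hIm
  have hRsa : IsSelfAdjoint R := isSelfAdjoint_reOp T
  have hIsa : IsSelfAdjoint Im := isSelfAdjoint_imOp T
  -- numerical radius bounds the norms of real and imaginary parts
  have hRnum : ‖R‖ ≤ numRad T := by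
    refine opNorm_le_of_abs_inner_le hRsa (numRad_nonneg T) fun z => ?_
    rw [hR, inner_reOp]
    calc ‖(((inner ℂ (T z) z : ℂ)).re : ℂ)‖
        = |((inner ℂ (T z) z : ℂ)).re| := by rw [Complex.norm_real, Real.norm_eq_abs]
      _ ≤ ‖(inner ℂ (T z) z : ℂ)‖ := Complex.abs_re_le_norm _
      _ ≤ numRad T * ‖z‖^2 := abs_inner_le_numRad T z
  have hInum : ‖Im‖ ≤ numRad T := by
    refine opNorm_le_of_abs_inner_le hIsa (numRad_nonneg T) fun z => ?_
    rw [hIm, inner_imOp]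
    calc ‖((-((inner ℂ (T z) z : ℂ)).im : ℝ) : ℂ)‖
        = |(-((inner ℂ (T z) z : ℂ)).im : ℝ)| := by rw [Complex.norm_real, Real.norm_eq_abs]
      _ = |((inner ℂ (T z) z : ℂ)).im| := abs_neg _
      _ ≤ ‖(inner ℂ (T z) z : ℂ)‖ := Complex.abs_im_le_norm _
      _ ≤ numRad T * ‖z‖^2 := abs_inner_le_numRad T z
  -- ‖N‖ ≤ 2 (‖R‖² + ‖Im‖²)
  have hRsq : ‖R * R‖ = ‖R‖^2 := by
    calc ‖R * R‖ = ‖star R * R‖ := by rw [hRsa.star_eq]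
      _ = ‖R‖ * ‖R‖ := CStarRing.norm_star_mul_self
      _ = ‖R‖^2 := (sq ‖R‖).symm
  have hIsq : ‖Im * Im‖ = ‖Im‖^2 := by
    calc ‖Im * Im‖ = ‖star Im * Im‖ := by rw [hIsa.star_eq]
      _ = ‖Im‖ * ‖Im‖ := CStarRing.norm_star_mul_self
      _ = ‖Im‖^2 := (sq ‖Im‖).symm
  have hNle : ‖adjoint T * T + T * adjoint T‖ / 2 ≤ ‖R‖^2 + ‖Im‖^2 := by
    have hid := reOp_sq_add_imOp_sq T
    rw [← hR, ← hIm] at hid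
    have hhalf : ‖(2:ℝ)⁻¹ • (adjoint T * T + T * adjoint T)‖
        = ‖adjoint T * T + T * adjoint T‖ / 2 := by
      rw [norm_smul, Real.norm_eq_abs]
      rw [abs_of_nonneg (by norm_num : (0:ℝ) ≤ (2:ℝ)⁻¹)]
      ring
    calc ‖adjoint T * T + T * adjoint T‖ / 2
        = ‖(2:ℝ)⁻¹ • (adjoint T * T + T * adjoint T)‖ := hhalf.symm
      _ = ‖R * R + Im * Im‖ := by rw [← hid]
      _ ≤ ‖R * R‖ + ‖Im * Im‖ := norm_add_le _ _
      _ = ‖R‖^2 + ‖Im‖^2 := by rw [hRsq, hIsq]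
  -- positivity facts
  have hTTpos : (0 : H →L[ℂ] H) ≤ adjoint T * T := by
    rw [← star_eq_adjoint]; exact star_mul_self_nonneg T
  have hTTpos' : (0 : H →L[ℂ] H) ≤ T * adjoint T := by
    rw [← star_eq_adjoint]; exact mul_star_self_nonneg T
  -- first lower bound on ‖N‖
  have hTTnorm : ‖adjoint T * T‖ = ‖T‖^2 := by
    rw [← star_eq_adjoint, CStarRing.norm_star_mul_self, sq]
  have hTTnorm' : ‖T * adjoint T‖ = ‖T‖^2 := by
    rw [← star_eq_adjoint, CStarRing.norm_self_mul_star, sq]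
  have hb1 : (1 + α^2) * ‖T‖^2 ≤ ‖adjoint T * T + T * adjoint T‖ := by
    have hle : ((1 + α^2 : ℝ)) • (adjoint T * T) ≤ adjoint T * T + T * adjoint T := by
      have e : ((1 + α^2 : ℝ)) • (adjoint T * T)
          = adjoint T * T + (α^2 : ℝ) • (adjoint T * T) := by
        rw [add_smul, one_smul]
      rw [e]
      exact add_le_add_right h1 _
    have hpos : (0 : H →L[ℂ] H) ≤ ((1 + α^2 : ℝ)) • (adjoint T * T) :=
      isPositive_smul_of_nonneg (by positivity) hTTpos
    have := CStarAlgebra.norm_le_norm_of_nonneg_of_le hpos hle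
    calc (1 + α^2) * ‖T‖^2 = ‖((1 + α^2 : ℝ)) • (adjoint T * T)‖ := by
          rw [norm_smul, Real.norm_eq_abs, abs_of_nonneg (by positivity), hTTnorm]
      _ ≤ ‖adjoint T * T + T * adjoint T‖ := this
  have hb2 : (1 + 1/β^2) * ‖T‖^2 ≤ ‖adjoint T * T + T * adjoint T‖ := by
    have hinv : ((β^2)⁻¹ : ℝ) • (T * adjoint T) ≤ adjoint T * T := by
      have := smul_le_smul_op (r := (β^2)⁻¹) (by positivity) h2
      rwa [smul_smul, inv_mul_cancel₀ (ne_of_gt hβ0), one_smul] at this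
    have hle : ((1 + 1/β^2 : ℝ)) • (T * adjoint T) ≤ adjoint T * T + T * adjoint T := by
      have e : ((1 + 1/β^2 : ℝ)) • (T * adjoint T)
          = ((β^2)⁻¹ : ℝ) • (T * adjoint T) + T * adjoint T := by
        rw [add_smul, one_smul, one_div, add_comm]
      rw [e]
      exact add_le_add_left hinv _
    have hpos : (0 : H →L[ℂ] H) ≤ ((1 + 1/β^2 : ℝ)) • (T * adjoint T) :=
      isPositive_smul_of_nonneg (by positivity) hTTpos'
    have := CStarAlgebra.norm_le_norm_of_nonneg_of_le hpos hle
    calc (1 + 1/β^2) * ‖T‖^2 = ‖((1 + 1/β^2 : ℝ)) • (T * adjoint T)‖ := by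
          rw [norm_smul, Real.norm_eq_abs, abs_of_nonneg (by positivity), hTTnorm']
      _ ≤ ‖adjoint T * T + T * adjoint T‖ := this
  have hmax : max (1 + α^2) (1 + 1/β^2) * ‖T‖^2 ≤ ‖adjoint T * T + T * adjoint T‖ := by
    rcases max_cases (1 + α^2) (1 + 1/β^2) with ⟨h, _⟩ | ⟨h, _⟩ <;> rw [h]
    · exact hb1
    · exact hb2
  -- combine
  have hR0 : 0 ≤ ‖R‖ := norm_nonneg _
  have hI0 : 0 ≤ ‖Im‖ := norm_nonneg _
  have hwR : ‖R‖^2 ≤ (numRad T)^2 := by nlinarith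
  have hwI : ‖Im‖^2 ≤ (numRad T)^2 := by nlinarith
  have hsum : max (1 + α^2) (1 + 1/β^2) * ‖T‖^2 / 2 ≤ ‖R‖^2 + ‖Im‖^2 := by linarith
  rcases abs_cases (‖R‖^2 - ‖Im‖^2) with ⟨he, _⟩ | ⟨he, _⟩ <;> rw [he] <;> linarith
end

section
/- If T is an invertible bounded linear operator on a complex Hilbert space, then w(T) > ‖T‖/2. Consequently, if w(T) = ‖T‖/2 then T is not invertible. -/
variable {H : Type*} [NormedAddCommGroup H] [InnerProductSpace ℂ H] [CompleteSpace H]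

local notation "⟪" x ", " y "⟫" => @inner ℂ _ _ x y

open ContinuousLinearMap in
lemma aux_normalize_inner (A : H →L[ℂ] H) {c : ℝ}
    (h : ∀ x : H, ‖x‖ = 1 → ‖⟪A x, x⟫‖ ≤ c) (x : H) :
    ‖⟪A x, x⟫‖ ≤ c * ‖x‖ ^ 2 := by
  rcases eq_or_ne x 0 with rfl | hx
  · simp
  · have hn : (‖x‖ : ℝ) ≠ 0 := norm_ne_zero_iff.mpr hx
    set u : H := ‖x‖⁻¹ • x with hu_def
    have hu : ‖u‖ = 1 := norm_smul_inv_norm hx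
    have hxu : x = ((‖x‖ : ℂ)) • u := by
      rw [hu_def, Complex.coe_smul, smul_inv_smul₀ hn]
    have hkey : ⟪A x, x⟫ = (‖x‖ : ℂ)^2 * ⟪A u, u⟫ := by
      conv_lhs => rw [hxu]
      rw [map_smul, inner_smul_left, inner_smul_right, Complex.conj_ofReal]
      ring
    rw [hkey, norm_mul]
    have h2 : ‖((‖x‖:ℂ)^2)‖ = ‖x‖^2 := by
      rw [norm_pow, Complex.norm_real, Real.norm_eq_abs, abs_of_nonneg (norm_nonneg x)]
    rw [h2, mul_comm c]
    exact mul_le_mul_of_nonneg_left (h u hu) (by positivity)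

lemma aux_normalize_norm (A : H →L[ℂ] H) {K : ℝ}
    (h : ∀ x : H, ‖x‖ = 1 → ‖A x‖ ^ 2 ≤ K) (x : H) :
    ‖A x‖ ^ 2 ≤ K * ‖x‖ ^ 2 := by
  rcases eq_or_ne x 0 with rfl | hx
  · simp
  · have hn : (‖x‖ : ℝ) ≠ 0 := norm_ne_zero_iff.mpr hx
    set u : H := ‖x‖⁻¹ • x with hu_def
    have hu : ‖u‖ = 1 := norm_smul_inv_norm hx
    have hxu : x = ((‖x‖ : ℂ)) • u := by
      rw [hu_def, Complex.coe_smul, smul_inv_smul₀ hn]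
    have hkey : ‖A x‖ = ‖x‖ * ‖A u‖ := by
      conv_lhs => rw [hxu, map_smul, norm_smul]
      simp
    rw [hkey, mul_pow, mul_comm K]
    exact mul_le_mul_of_nonneg_left (h u hu) (by positivity)

open ContinuousLinearMap in
lemma norm_le_of_symm (A : H →L[ℂ] H)
    (hsym : ∀ x y : H, ⟪A x, y⟫ = ⟪x, A y⟫)
    {c : ℝ} (hc : 0 ≤ c)
    (hb : ∀ x : H, ‖⟪A x, x⟫‖ ≤ c * ‖x‖ ^ 2) : ‖A‖ ≤ c := by
  refine A.opNorm_le_bound hc (fun x => ?_)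
  rcases eq_or_ne (A x) 0 with h0 | h0
  · rw [h0, norm_zero]; positivity
  have hx : x ≠ 0 := by rintro rfl; simp at h0
  have key : ∀ u v : H, (⟪A u, v⟫).re ≤ c / 2 * (‖u‖ ^ 2 + ‖v‖ ^ 2) := by
    intro u v
    have hconj : ⟪A v, u⟫ = (starRingEnd ℂ) ⟪A u, v⟫ := by
      rw [hsym v u, ← inner_conj_symm]
    have expand : ⟪A (u+v), u+v⟫ - ⟪A (u-v), u-v⟫
        = 2 * (⟪A u, v⟫ + (starRingEnd ℂ) ⟪A u, v⟫) := by
      rw [← hconj]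
      simp only [map_add, map_sub, inner_add_left, inner_add_right, inner_sub_left,
        inner_sub_right]
      ring
    rw [Complex.add_conj] at expand
    have h4 := congrArg Complex.re expand
    simp only [Complex.sub_re, Complex.mul_re, Complex.ofReal_re, Complex.ofReal_im,
      Complex.re_ofNat, Complex.im_ofNat] at h4
    have b1 : (⟪A (u+v), u+v⟫).re ≤ c * ‖u + v‖ ^ 2 :=
      le_trans (Complex.re_le_norm _) (hb _)
    have hpar := parallelogram_law_with_norm ℂ u v
    have b2' : |(⟪A (u-v), u-v⟫).re| ≤ c * ‖u - v‖ ^ 2 :=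
      le_trans (Complex.abs_re_le_norm _) (hb _)
    have b2'' := (abs_le.mp b2').1
    nlinarith [h4]
  set v : H := ((‖x‖ / ‖A x‖ : ℝ) : ℂ) • A x with hv_def
  have hAx : (0:ℝ) < ‖A x‖ := norm_pos_iff.mpr h0
  have hvnorm : ‖v‖ = ‖x‖ := by
    rw [hv_def, norm_smul]
    simp only [Complex.norm_real, Real.norm_eq_abs]
    rw [abs_of_nonneg (by positivity)]
    field_simp
  have hz : ⟪A x, A x⟫ = ((‖A x‖ ^ 2 : ℝ) : ℂ) := by
    rw [inner_self_eq_norm_sq_to_K]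
    norm_num
  have hvinner : (⟪A x, v⟫).re = ‖x‖ * ‖A x‖ := by
    rw [hv_def, inner_smul_right, hz, ← Complex.ofReal_mul, Complex.ofReal_re]
    field_simp
  have hkxv := key x v
  rw [hvinner, hvnorm] at hkxv
  have hx0 : 0 < ‖x‖ := norm_pos_iff.mpr hx
  nlinarith [hkxv, hx0, hAx]

open ContinuousLinearMap in
theorem numRad_gt_half_norm_of_invertible [Nontrivial H] (T : H →L[ℂ] H) :
    (IsUnit T → numRad T > ‖T‖ / 2) ∧ (numRad T = ‖T‖ / 2 → ¬ IsUnit T) := by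
  have main : IsUnit T → numRad T > ‖T‖ / 2 := by
    intro hT
    obtain ⟨e, he⟩ := exists_norm_eq H (zero_le_one)
    have hbdd : BddAbove {r : ℝ | ∃ x : H, ‖x‖ = 1 ∧ r = ‖⟪T x, x⟫‖} := by
      refine ⟨‖T‖, ?_⟩
      rintro r ⟨x, hx, rfl⟩
      calc ‖⟪T x, x⟫‖ = ‖(⟪T x, x⟫ : ℂ)‖ := rfl
        _ ≤ ‖T x‖ * ‖x‖ := norm_inner_le_norm _ _
        _ ≤ (‖T‖ * ‖x‖) * ‖x‖ := by
            exact mul_le_mul_of_nonneg_right (T.le_opNorm x) (norm_nonneg x)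
        _ = ‖T‖ := by rw [hx]; ring
    have hmem : ∀ x : H, ‖x‖ = 1 → ‖⟪T x, x⟫‖ ≤ numRad T := by
      intro x hx
      exact le_csSup hbdd ⟨x, hx, rfl⟩
    set w := numRad T with hw_def
    have hw0 : 0 ≤ w := le_trans (by positivity) (hmem e he)
    -- symmetry of reOp and imOp
    have hsym_re : ∀ x y : H, ⟪reOp T x, y⟫ = ⟪x, reOp T y⟫ := by
      intro x y
      simp only [reOp, ContinuousLinearMap.coe_smul', Pi.smul_apply,
        ContinuousLinearMap.add_apply, ← Complex.coe_smul, inner_smul_left,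
        inner_smul_right, Complex.conj_ofReal, inner_add_left, inner_add_right,
        ContinuousLinearMap.adjoint_inner_left, ContinuousLinearMap.adjoint_inner_right]
      ring
    have hconjI : (starRingEnd ℂ) ((2 * Complex.I)⁻¹) = -(2 * Complex.I)⁻¹ := by
      rw [map_inv₀, map_mul, Complex.conj_I]
      simp [mul_neg, inv_neg, Complex.conj_ofNat]
    have hsym_im : ∀ x y : H, ⟪imOp T x, y⟫ = ⟪x, imOp T y⟫ := by
      intro x y
      simp only [imOp, ContinuousLinearMap.coe_smul', Pi.smul_apply,
        ContinuousLinearMap.sub_apply, inner_smul_left, inner_smul_right, hconjI,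
        inner_sub_left, inner_sub_right,
        ContinuousLinearMap.adjoint_inner_left, ContinuousLinearMap.adjoint_inner_right]
      ring
    -- inner products of reOp and imOp
    have hre_abs : ∀ x : H, ‖x‖ = 1 → ‖⟪reOp T x, x⟫‖ ≤ w := by
      intro x hx
      have hval : ⟪reOp T x, x⟫ = (((⟪T x, x⟫ : ℂ).re : ℝ) : ℂ) := by
        simp only [reOp, ContinuousLinearMap.coe_smul', Pi.smul_apply,
          ContinuousLinearMap.add_apply, ← Complex.coe_smul, inner_smul_left,
          Complex.conj_ofReal, inner_add_left, ContinuousLinearMap.adjoint_inner_left]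
        rw [← inner_conj_symm x (T x), Complex.add_conj]
        push_cast
        ring
      rw [hval]
      calc ‖(((⟪T x, x⟫ : ℂ).re : ℝ) : ℂ)‖ = |(⟪T x, x⟫ : ℂ).re| :=
            Complex.norm_real _
        _ ≤ ‖⟪T x, x⟫‖ := Complex.abs_re_le_norm _
        _ ≤ w := hmem x hx
    have him_abs : ∀ x : H, ‖x‖ = 1 → ‖⟪imOp T x, x⟫‖ ≤ w := by
      intro x hx
      have hval : ⟪imOp T x, x⟫
          = (starRingEnd ℂ) ((2 * Complex.I)⁻¹) * (⟪T x, x⟫ - (starRingEnd ℂ) ⟪T x, x⟫) := by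
        simp only [imOp, ContinuousLinearMap.coe_smul', Pi.smul_apply,
          ContinuousLinearMap.sub_apply, inner_smul_left, inner_sub_left,
          ContinuousLinearMap.adjoint_inner_left]
        rw [← inner_conj_symm x (T x)]
      rw [hval, norm_mul, Complex.sub_conj]
      have h1 : ‖(starRingEnd ℂ) ((2 * Complex.I)⁻¹)‖ = 2⁻¹ := by
        rw [hconjI]
        simp [map_inv₀]
      have h2 : ‖((2 * (⟪T x, x⟫ : ℂ).im : ℝ) : ℂ) * Complex.I‖
          = 2 * |(⟪T x, x⟫ : ℂ).im| := by
        rw [norm_mul, Complex.norm_I, Complex.norm_real, Real.norm_eq_abs, abs_mul]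
        simp
      rw [h1, h2]
      calc 2⁻¹ * (2 * |(⟪T x, x⟫ : ℂ).im|) = |(⟪T x, x⟫ : ℂ).im| := by ring
        _ ≤ ‖⟪T x, x⟫‖ := Complex.abs_im_le_norm _
        _ ≤ w := hmem x hx
    -- norms of reOp and imOp
    have hre_norm : ‖reOp T‖ ≤ w :=
      norm_le_of_symm _ hsym_re hw0 (aux_normalize_inner _ hre_abs)
    have him_norm : ‖imOp T‖ ≤ w :=
      norm_le_of_symm _ hsym_im hw0 (aux_normalize_inner _ him_abs)
    -- parallelogram identity
    have hpar : ∀ x : H, ‖T x‖ ^ 2 + ‖adjoint T x‖ ^ 2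
        = 2 * (‖reOp T x‖ ^ 2 + ‖imOp T x‖ ^ 2) := by
      intro x
      have h1 : ‖reOp T x‖ = ‖T x + adjoint T x‖ / 2 := by
        simp only [reOp, ContinuousLinearMap.coe_smul', Pi.smul_apply,
          ContinuousLinearMap.add_apply, norm_smul]
        simp [Real.norm_eq_abs]
        ring
      have h2 : ‖imOp T x‖ = ‖T x - adjoint T x‖ / 2 := by
        simp only [imOp, ContinuousLinearMap.coe_smul', Pi.smul_apply,
          ContinuousLinearMap.sub_apply, norm_smul, norm_inv]
        simp [norm_mul, Complex.norm_I]
        ring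
      have h3 := parallelogram_law_with_norm ℂ (T x) (adjoint T x)
      rw [h1, h2]
      field_simp
      linarith
    -- invertibility bound
    obtain ⟨U, hU⟩ := hT
    have hUinv : adjoint ((↑U⁻¹ : H →L[ℂ] H)) ∘L adjoint T = 1 := by
      rw [← adjoint_comp]
      have : T ∘L (↑U⁻¹ : H →L[ℂ] H) = 1 := by
        rw [← hU]; exact U.mul_inv
      rw [this]
      have hid : (1 : H →L[ℂ] H) = ContinuousLinearMap.id ℂ H := rfl
      rw [hid, adjoint_id]
    have hinv : ∀ x : H, ‖x‖ ≤ ‖adjoint ((↑U⁻¹ : H →L[ℂ] H))‖ * ‖adjoint T x‖ := by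
      intro x
      have hx : adjoint ((↑U⁻¹ : H →L[ℂ] H)) (adjoint T x) = x := by
        have := congrFun (congrArg DFunLike.coe hUinv) x
        simpa using this
      calc ‖x‖ = ‖adjoint ((↑U⁻¹ : H →L[ℂ] H)) (adjoint T x)‖ := by rw [hx]
        _ ≤ ‖adjoint ((↑U⁻¹ : H →L[ℂ] H))‖ * ‖adjoint T x‖ := le_opNorm _ _
    set cN := ‖adjoint ((↑U⁻¹ : H →L[ℂ] H))‖ with hcN_def
    have hcN : 0 < cN := by
      by_contra hcon
      push_neg at hcon
      have h1 : (1:ℝ) ≤ cN * ‖adjoint T e‖ := he ▸ hinv e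
      nlinarith [norm_nonneg (adjoint T e), norm_nonneg (adjoint ((↑U⁻¹ : H →L[ℂ] H)))]
    -- unit vector bound
    have hunit : ∀ x : H, ‖x‖ = 1 → ‖T x‖ ^ 2 ≤ 4 * w ^ 2 - (cN⁻¹) ^ 2 := by
      intro x hx
      have hr : ‖reOp T x‖ ≤ w := by
        calc ‖reOp T x‖ ≤ ‖reOp T‖ * ‖x‖ := le_opNorm _ _
          _ = ‖reOp T‖ := by rw [hx, mul_one]
          _ ≤ w := hre_norm
      have hi : ‖imOp T x‖ ≤ w := by
        calc ‖imOp T x‖ ≤ ‖imOp T‖ * ‖x‖ := le_opNorm _ _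
          _ = ‖imOp T‖ := by rw [hx, mul_one]
          _ ≤ w := him_norm
      have h3 : cN⁻¹ ≤ ‖adjoint T x‖ := by
        rw [← one_div]
        rw [div_le_iff₀ hcN]
        have := hinv x
        rw [hx] at this
        linarith [this]
      have h3sq : (cN⁻¹) ^ 2 ≤ ‖adjoint T x‖ ^ 2 :=
        pow_le_pow_left₀ (by positivity) h3 2
      have hr2 : ‖reOp T x‖ ^ 2 ≤ w ^ 2 := pow_le_pow_left₀ (norm_nonneg _) hr 2
      have hi2 : ‖imOp T x‖ ^ 2 ≤ w ^ 2 := pow_le_pow_left₀ (norm_nonneg _) hi 2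
      have hp := hpar x
      linarith
    have hK0 : (0:ℝ) ≤ 4 * w ^ 2 - (cN⁻¹) ^ 2 :=
      le_trans (sq_nonneg ‖T e‖) (hunit e he)
    have hTx := aux_normalize_norm T hunit
    have hTnorm : ‖T‖ ≤ Real.sqrt (4 * w ^ 2 - (cN⁻¹) ^ 2) := by
      refine T.opNorm_le_bound (Real.sqrt_nonneg _) (fun x => ?_)
      calc ‖T x‖ = Real.sqrt (‖T x‖ ^ 2) := (Real.sqrt_sq (norm_nonneg _)).symm
        _ ≤ Real.sqrt ((4 * w ^ 2 - (cN⁻¹) ^ 2) * ‖x‖ ^ 2) := Real.sqrt_le_sqrt (hTx x)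
        _ = Real.sqrt (4 * w ^ 2 - (cN⁻¹) ^ 2) * ‖x‖ := by
            rw [Real.sqrt_mul hK0, Real.sqrt_sq (norm_nonneg _)]
    have hT2 : ‖T‖ ^ 2 ≤ 4 * w ^ 2 - (cN⁻¹) ^ 2 := by
      calc ‖T‖ ^ 2 ≤ (Real.sqrt (4 * w ^ 2 - (cN⁻¹) ^ 2)) ^ 2 :=
            pow_le_pow_left₀ (norm_nonneg _) hTnorm 2
        _ = _ := Real.sq_sqrt hK0
    have hc2 : (0:ℝ) < (cN⁻¹) ^ 2 := by positivity
    have hsum : (0:ℝ) ≤ ‖T‖ / 2 + w := by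
      have := norm_nonneg T
      linarith
    nlinarith [hT2, hc2, hsum]
  refine ⟨main, fun heq hU => ?_⟩
  have := main hU
  rw [heq] at this
  exact lt_irrefl _ this
end
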